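/- arXiv:math/0312344 — 3 statements merged into one kernel-verified Lean document; each statement's English description precedes it below -/
import Mathlib

section
/- Almost surely, for every pair s,t ∈ ℤ there exists k such that s and t lie in the same k block, i.e. B_k(s)=B_k(t). -/
open MeasureTheory
open scoped Classical ENNReal

noncomputable section

namespace BHS

/-! ## Generic notions about specifications on a finite alphabet -/

/-- The left shift on two-sided sequences. -/
def shift {A : Type*} (ω : ℤ → A) : ℤ → A := fun i => ω (i + 1)

/-- The past of a two-sided sequence: `past ω n = ω (-(n+1))`,
i.e. the sequence `x₋₁, x₋₂, …`. -/
def past {A : Type*} (ω : ℤ → A) : ℕ → A := fun n => ω (-(n + 1 : ℤ))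

/-- The variation of a specification at distance `k`:
the supremum of `‖g b - g b'‖₁` over pasts agreeing in their first `k` coordinates. -/
def specVar {A : Type*} [Fintype A] (g : (ℕ → A) → A → ℝ) (k : ℕ) : ℝ :=
  sSup {r : ℝ | ∃ b b' : ℕ → A, (∀ i : ℕ, i < k → b i = b' i) ∧
    r = ∑ a : A, |g b a - g b' a|}

/-- `μ` is a (shift-invariant) Gibbs measure for the specification `g`. -/
def IsGibbs {A : Type*} [Fintype A] [MeasurableSpace A]
    (g : (ℕ → A) → A → ℝ) (μ : Measure (ℤ → A)) : Prop :=
  IsProbabilityMeasure μ ∧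
  (∀ s : Set (ℤ → A), MeasurableSet s → μ (shift ⁻¹' s) = μ s) ∧
  ∀ f : A → ℝ,
    (MeasureTheory.condExp (MeasurableSpace.comap past inferInstance) μ
        (fun ω => f (ω 0))) =ᵐ[μ]
      (fun ω => ∑ a : A, g (past ω) a * f a)

/-- The coordinates of `μ` are i.i.d. fair ±1 coin flips (`true` = +1). -/
def IsCoinFlips {ι : Type*} (μ : Measure (ι → Bool)) : Prop :=
  IsProbabilityMeasure μ ∧
  ∀ (s : Finset ι) (f : ι → Bool),
    μ {y | ∀ i ∈ s, y i = f i} = (1 / 2 : ℝ≥0∞) ^ s.card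

/-! ## The construction of Berger, Hoffman and Sidoravicius -/

/-- `ℓ_k = ⌈(1+ε)^k⌉`. -/
def ell (ε : ℝ) (k : ℕ) : ℕ := ⌈(1 + ε) ^ k⌉₊

/-- `β_k = 2 ^ ℓ_k`. -/
def beta (ε : ℝ) (k : ℕ) : ℕ := 2 ^ ell ε k

/-- `ν_k = β_k / β_{k-1}`. -/
def nu (ε : ℝ) (k : ℕ) : ℝ := (beta ε k : ℝ) / (beta ε (k - 1) : ℝ)

/-- `K` satisfies the three inequalities required of `K(ε)`, for every `k ≥ K`. -/
def KGood (ε : ℝ) (K : ℕ) : Prop :=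
  ∀ k : ℕ, K ≤ k →
    ((1 - (2 : ℝ) ^ (-(ell ε k : ℝ))) ^
        ((beta ε k : ℝ) ^ (1 + ε) / (2 * (ell ε (k - 1) : ℝ))) <
      (2 : ℝ) ^ (-(3 * k : ℝ))) ∧
    (nu ε k ^ (-ε) ≤ (2 : ℝ) ^ (-(3 * k : ℝ))) ∧
    ((2 : ℝ) ^ (nu ε k ^ (1 - ε)) * ((2 : ℝ) ^ (-(k : ℝ))) ^ (nu ε k ^ (1 - ε) / 2) ≤
      (2 : ℝ) ^ (-(3 * k : ℝ)))

/-- The word `I_k` (that is, `ℓ_k − 1` pluses followed by one minus; `true` = +1)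
ends at position `c` in the two-sided sequence `y`. -/
def EndsAt (ε : ℝ) (k : ℕ) (y : ℤ → Bool) (c : ℤ) : Prop :=
  y c = false ∧ ∀ i : ℕ, 1 ≤ i → i ≤ ell ε k - 1 → y (c - (i : ℤ)) = true

/-- `[a, b)` is a (complete) `k` block of `y`. -/
def IsBlock (ε : ℝ) (k : ℕ) (y : ℤ → Bool) (a b : ℤ) : Prop :=
  a < b ∧ EndsAt ε k y a ∧ EndsAt ε k y b ∧
    ∀ c : ℤ, a < c → c < b → ¬EndsAt ε k y c

/-- The left endpoint of the `k` block containing `t`. -/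
def leftEnd (ε : ℝ) (k : ℕ) (y : ℤ → Bool) (t : ℤ) : ℤ :=
  sSup {c : ℤ | c ≤ t ∧ EndsAt ε k y c}

/-- The right endpoint of the `k` block containing `t`. -/
def rightEnd (ε : ℝ) (k : ℕ) (y : ℤ → Bool) (t : ℤ) : ℤ :=
  sInf {c : ℤ | t < c ∧ EndsAt ε k y c}

/-- `t` lies in the beginning of the `k` block containing it:  for `k = K` this means
`t - a < β_K^{1-ε}`, and for `k ≠ K` it means that `t` lies in one of the first
`⌈ν_k^{1-ε}⌉` `(k-1)` blocks of its `k` block. -/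
def InBeginning (ε : ℝ) (K k : ℕ) (y : ℤ → Bool) (t : ℤ) : Prop :=
  if k = K then ((t - leftEnd ε k y t : ℤ) : ℝ) < (beta ε K : ℝ) ^ (1 - ε)
  else ((Finset.Ioc (leftEnd ε k y t) t).filter (fun c => EndsAt ε (k - 1) y c)).card <
    ⌈nu ε k ^ (1 - ε)⌉₊

/-- `t` lies in the opening of the `k` block containing it. -/
def InOpening (ε : ℝ) (K k : ℕ) (y : ℤ → Bool) (t : ℤ) : Prop :=
  ∀ j : ℕ, K ≤ j → j ≤ k →
    InBeginning ε K j y t ∧ (t - leftEnd ε j y t) < (beta ε (j + 1) : ℤ)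

/-- The opening `C(B)` of the `k` block `B = [a, b)`. -/
def opening (ε : ℝ) (K k : ℕ) (y : ℤ → Bool) (a b : ℤ) : Finset ℤ :=
  (Finset.Ico a b).filter (fun t => InOpening ε K k y t)

/-- The `k` block `[a, b)` is good. -/
def GoodBlock (ε : ℝ) (K k : ℕ) (y : ℤ → Bool) (a b : ℤ) : Prop :=
  ((b - a : ℤ) : ℝ) < (beta ε k : ℝ) ^ (1 + ε) ∧
  (beta ε k : ℝ) ^ (1 - ε) * (2 : ℝ) ^ (-(k : ℝ)) < ((opening ε K k y a b).card : ℝ)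

/-- The `k` block containing `t` is good. -/
def GoodAt (ε : ℝ) (K k : ℕ) (y : ℤ → Bool) (t : ℤ) : Prop :=
  GoodBlock ε K k y (leftEnd ε k y t) (rightEnd ε k y t)

/-- `t` is `k` beautiful. -/
def Beautiful (ε : ℝ) (K k : ℕ) (y : ℤ → Bool) (t : ℤ) : Prop :=
  ∀ j : ℕ, k ≤ j → GoodAt ε K j y t ∧ ¬InBeginning ε K j y t

/-! ### The specification `g^ε` -/

/-- The two-sided sequence `ȳ` built from the past `y = (y₋₁, y₋₂, …)` and the
candidate value `y₀` (positions `> 0` are filled with junk `true`s). -/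
def ybar (y : ℕ → Bool) (y0 : Bool) : ℤ → Bool := fun i =>
  if i = 0 then y0 else if i < 0 then y ((-i).toNat - 1) else true

/-- The set of levels `k ≥ K` such that `0` lies in the opening of its `k` block. -/
def kZeroSet (ε : ℝ) (K : ℕ) (yb : ℤ → Bool) : Set ℕ :=
  {k : ℕ | K ≤ k ∧ InOpening ε K k yb 0}

/-- `k₀`, with the convention that it equals `K - 1` when the above set is empty
(the unbounded case `k₀ = ∞` is handled separately). -/
def kZero (ε : ℝ) (K : ℕ) (yb : ℤ → Bool) : ℕ :=
  if (kZeroSet ε K yb).Nonempty then sSup (kZeroSet ε K yb) else K - 1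

/-- The opening of the (partial) `k` block of `yb` containing `0`. -/
def Cblock (ε : ℝ) (K k : ℕ) (yb : ℤ → Bool) : Finset ℤ :=
  opening ε K k yb (leftEnd ε k yb 0) 1

/-- The set `S`: the opening of the `(k₀+1)` block containing `0`, with the maximal
element removed if its cardinality is even; `S = ∅` when `k₀ = ∞`. -/
def Sset (ε : ℝ) (K : ℕ) (yb : ℤ → Bool) : Finset ℤ :=
  if BddAbove (kZeroSet ε K yb) then
    if Even (Cblock ε K (kZero ε K yb + 1) yb).card then
      (Cblock ε K (kZero ε K yb + 1) yb).erase
        (WithBot.unbotD 0 (Cblock ε K (kZero ε K yb + 1) yb).max)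
    else Cblock ε K (kZero ε K yb + 1) yb
  else ∅

/-- The bias `υ`. -/
def upsilon (ε : ℝ) (K : ℕ) (yb : ℤ → Bool) : ℝ :=
  if Sset ε K yb = ∅ then 0
  else if ∃ t ∈ Sset ε K yb, t < -(beta ε (kZero ε K yb + 2) : ℤ) then 0
  else if kZeroSet ε K yb = ∅ then 0.4
  else (beta ε (kZero ε K yb) : ℝ) ^ (-(1 : ℝ) / 2 + ε)

/-- The ±1 value of the past `x = (x₋₁, x₋₂, …)` at the negative position `t`. -/
def xbar (x : ℕ → Bool) (t : ℤ) : ℝ := if x ((-t).toNat - 1) = true then 1 else -1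

/-- `g₁(x, y, y₀)`: the probability that `x₀ = +1` given the pasts `x`, `y`
and the value `y₀`. -/
def g1 (ε : ℝ) (K : ℕ) (x y : ℕ → Bool) (y0 : Bool) : ℝ :=
  if Sset ε K (ybar y y0) = ∅ then 1 / 2
  else 1 / 2 + upsilon ε K (ybar y y0) *
    Real.sign (∑ t ∈ Sset ε K (ybar y y0), xbar x t)

/-- The specification `g^ε` on the four letter alphabet `{±1}² = Bool × Bool`
(first coordinate `x`, second coordinate `y`, `true` = +1); the argument
`b : ℕ → Bool × Bool` is the past `((x₋₁,y₋₁), (x₋₂,y₋₂), …)`. -/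
def gspec (ε : ℝ) (K : ℕ) (b : ℕ → Bool × Bool) : Bool × Bool → ℝ := fun a =>
  if a.1 = true then (1 / 2) * g1 ε K (fun i => (b i).1) (fun i => (b i).2) a.2
  else (1 / 2) * (1 - g1 ε K (fun i => (b i).1) (fun i => (b i).2) a.2)

/-! ### Signatures -/

/-- `C′(B)`: the opening of `B`, with the maximum removed if `|C(B)|` is even. -/
def Cprime (ε : ℝ) (K k : ℕ) (y : ℤ → Bool) (a b : ℤ) : Finset ℤ :=
  if Even (opening ε K k y a b).card then
    (opening ε K k y a b).erase (WithBot.unbotD 0 (opening ε K k y a b).max)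
  else opening ε K k y a b

/-- The signature `X(B_k(t))` of the `k` block containing `t`. -/
def signature (ε : ℝ) (K k : ℕ) (ω : ℤ → Bool × Bool) (t : ℤ) : ℝ :=
  Real.sign (∑ s ∈ Cprime ε K k (fun i => (ω i).2)
      (leftEnd ε k (fun i => (ω i).2) t) (rightEnd ε k (fun i => (ω i).2) t),
    (if (ω s).1 = true then (1 : ℝ) else -1))


/-! ### Auxiliary lemmas for Statement 13 -/

section Statement13Aux

variable {μ : Measure (ℤ → Bool)}

lemma ell_pos' {ε : ℝ} (hε : 0 < ε) (k : ℕ) : 0 < ell ε k :=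
  Nat.ceil_pos.mpr (by positivity)

lemma ell_unbounded' {ε : ℝ} (hε : 0 < ε) (n : ℕ) : ∃ k, n ≤ ell ε k := by
  obtain ⟨k, hk⟩ := pow_unbounded_of_one_lt (n : ℝ) (by linarith : (1 : ℝ) < 1 + ε)
  refine ⟨k, ?_⟩
  have h2 : (n : ℝ) ≤ (⌈(1 + ε) ^ k⌉₊ : ℝ) := hk.le.trans (Nat.le_ceil _)
  exact_mod_cast h2

lemma endsAt_congr' {ε : ℝ} {k : ℕ} (hℓ : 0 < ell ε k) {y y' : ℤ → Bool} {c : ℤ}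
    (h : ∀ i ∈ Finset.Ioc (c - (ell ε k : ℤ)) c, y i = y' i)
    (he : EndsAt ε k y c) : EndsAt ε k y' c := by
  obtain ⟨h0, h1⟩ := he
  refine ⟨?_, ?_⟩
  · rw [← h c (by simp only [Finset.mem_Ioc]; omega)]; exact h0
  · intro i hi1 hi2
    rw [← h (c - i) (by simp only [Finset.mem_Ioc]; omega)]
    exact h1 i hi1 hi2

lemma endsAt_iff' {ε : ℝ} {k : ℕ} (hℓ : 0 < ell ε k) (y : ℤ → Bool) (c : ℤ) :
    EndsAt ε k y c ↔
      ∀ i ∈ Finset.Ioc (c - (ell ε k : ℤ)) c, y i = (if i = c then false else true) := by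
  constructor
  · rintro ⟨h0, h1⟩ i hi
    simp only [Finset.mem_Ioc] at hi
    by_cases hic : i = c
    · rw [if_pos hic, hic]; exact h0
    · rw [if_neg hic]
      have hj : i = c - ((c - i).toNat : ℤ) := by omega
      rw [hj]
      exact h1 _ (by omega) (by omega)
  · intro h
    refine ⟨?_, fun i hi1 hi2 => ?_⟩
    · have := h c (by simp only [Finset.mem_Ioc]; omega)
      rwa [if_pos rfl] at this
    · have := h (c - i) (by simp only [Finset.mem_Ioc]; omega)
      rwa [if_neg (by omega)] at this

lemma measure_endsAt' {ε : ℝ} (hε : 0 < ε) (hμ : IsCoinFlips μ) (k : ℕ) (c : ℤ) :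
    μ {y | EndsAt ε k y c} = (1 / 2 : ℝ≥0∞) ^ ell ε k := by
  have hℓ := ell_pos' hε k
  have h1 : {y : ℤ → Bool | EndsAt ε k y c} =
      {y : ℤ → Bool | ∀ i ∈ Finset.Ioc (c - (ell ε k : ℤ)) c,
        y i = (if i = c then false else true)} :=
    Set.ext fun y => endsAt_iff' hℓ y c
  rw [h1, hμ.2, Int.card_Ioc]
  congr 1
  omega

lemma measure_local' (hμ : IsCoinFlips μ) (S : Finset ℤ) (Q : (ℤ → Bool) → Prop)
    (hQ : ∀ y y' : ℤ → Bool, (∀ i ∈ S, y i = y' i) → Q y → Q y') :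
    μ {y | Q y} = ((S.powerset.filter fun T => Q fun i => decide (i ∈ T)).card : ℝ≥0∞)
      * (1 / 2 : ℝ≥0∞) ^ S.card := by
  classical
  have hmeas : ∀ f : ℤ → Bool, MeasurableSet {y : ℤ → Bool | ∀ i ∈ S, y i = f i} := by
    intro f
    have h1 : {y : ℤ → Bool | ∀ i ∈ S, y i = f i}
        = ⋂ i ∈ (S : Set ℤ), (fun y : ℤ → Bool => y i) ⁻¹' {f i} := by
      ext y; simp
    rw [h1]
    exact MeasurableSet.biInter S.countable_toSet fun i _ =>
      (measurable_pi_apply i) (measurableSet_singleton (f i))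
  have hconf : ∀ y : ℤ → Bool, ∀ i ∈ S,
      y i = decide (i ∈ S.filter fun i => y i = true) := by
    intro y i hi
    cases hyi : y i with
    | false =>
      refine (decide_eq_false fun hmem => ?_).symm
      have := (Finset.mem_filter.mp hmem).2
      rw [hyi] at this
      exact Bool.false_ne_true this
    | true => exact (decide_eq_true (Finset.mem_filter.mpr ⟨hi, hyi⟩)).symm
  have hset : {y : ℤ → Bool | Q y} =
      ⋃ T ∈ S.powerset.filter (fun T => Q fun i => decide (i ∈ T)),
        {y : ℤ → Bool | ∀ i ∈ S, y i = decide (i ∈ T)} := by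
    ext y
    simp only [Set.mem_setOf_eq, Set.mem_iUnion, Finset.mem_filter, Finset.mem_powerset,
      exists_prop]
    constructor
    · intro hy
      exact ⟨S.filter (fun i => y i = true),
        ⟨Finset.filter_subset _ _, hQ y _ (hconf y) hy⟩, hconf y⟩
    · rintro ⟨T, ⟨hTS, hTQ⟩, hy⟩
      exact hQ _ y (fun i hi => (hy i hi).symm) hTQ
  have hd : Set.PairwiseDisjoint
      ((S.powerset.filter fun T => Q fun i => decide (i ∈ T) : Finset (Finset ℤ)) : Set (Finset ℤ))
      (fun T => {y : ℤ → Bool | ∀ i ∈ S, y i = decide (i ∈ T)}) := by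
    intro T hT T' hT' hne
    simp only [Finset.coe_filter, Set.mem_setOf_eq, Finset.mem_powerset] at hT hT'
    rw [Function.onFun, Set.disjoint_left]
    intro y hy hy'
    apply hne
    ext i
    constructor
    · intro hiT
      have hiS := hT.1 hiT
      have hdd : decide (i ∈ T) = decide (i ∈ T') := by rw [← hy i hiS, hy' i hiS]
      exact (decide_eq_decide.mp hdd).mp hiT
    · intro hiT
      have hiS := hT'.1 hiT
      have hdd : decide (i ∈ T) = decide (i ∈ T') := by rw [← hy i hiS, hy' i hiS]
      exact (decide_eq_decide.mp hdd).mpr hiT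
  rw [hset, measure_biUnion_finset hd (fun T _ => hmeas _)]
  rw [Finset.sum_congr rfl (fun T _ => hμ.2 S (fun i => decide (i ∈ T))),
    Finset.sum_const, nsmul_eq_mul]

lemma card_filter_le' {ε : ℝ} (hε : 0 < ε) (k : ℕ) (c : ℕ → ℤ) (n : ℕ) :
    (((Finset.range n).biUnion fun j =>
        Finset.Ioc (c j - (ell ε k : ℤ)) (c j)).powerset.filter
      fun T => ∀ j < n, ¬ EndsAt ε k (fun i => decide (i ∈ T)) (c j)).card
      ≤ (2 ^ ell ε k - 1) ^ n := by
  classical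
  induction n with
  | zero =>
    refine le_trans (Finset.card_filter_le _ _) ?_
    simp
  | succ n ih =>
    have hℓ : 0 < ell ε k := ell_pos' hε k
    set ℓ := ell ε k with hℓdef
    set B := Finset.Ioc (c n - (ℓ : ℤ)) (c n) with hB
    set pat := Finset.Ioo (c n - (ℓ : ℤ)) (c n) with hpat
    set Sn := (Finset.range n).biUnion (fun j => Finset.Ioc (c j - (ℓ : ℤ)) (c j)) with hSn
    have hSsucc : (Finset.range (n + 1)).biUnion (fun j => Finset.Ioc (c j - (ℓ : ℤ)) (c j))
        = Sn ∪ B := by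
      rw [Finset.range_add_one, Finset.biUnion_insert, Finset.union_comm]
    rw [hSsucc]
    have hmaps : ∀ T ∈ (Sn ∪ B).powerset.filter
        (fun T => ∀ j < n + 1, ¬ EndsAt ε k (fun i => decide (i ∈ T)) (c j)),
        (T ∩ Sn, T ∩ B) ∈
          (Sn.powerset.filter fun T => ∀ j < n, ¬ EndsAt ε k (fun i => decide (i ∈ T)) (c j))
          ×ˢ (B.powerset.erase pat) := by
      intro T hT
      simp only [Finset.mem_filter, Finset.mem_powerset] at hT
      obtain ⟨hTsub, hTq⟩ := hT
      simp only [Finset.mem_product, Finset.mem_filter, Finset.mem_powerset, Finset.mem_erase]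
      refine ⟨⟨Finset.inter_subset_right, ?_⟩, ?_, Finset.inter_subset_right⟩
      · intro j hj he
        refine hTq j (Nat.lt_succ_of_lt hj) (endsAt_congr' hℓ (fun i hi => ?_) he)
        have hiS : i ∈ Sn := Finset.mem_biUnion.mpr ⟨j, Finset.mem_range.mpr hj, hi⟩
        exact decide_eq_decide.mpr (by simp [Finset.mem_inter, hiS])
      · intro hTB
        refine hTq n (Nat.lt_succ_self n) ⟨?_, ?_⟩
        · have hcn : c n ∉ T := by
            intro hc
            have hmem : c n ∈ pat := by
              rw [← hTB]
              exact Finset.mem_inter.mpr ⟨hc, by simp only [hB, Finset.mem_Ioc]; omega⟩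
            simp only [hpat, Finset.mem_Ioo] at hmem
            omega
          exact decide_eq_false hcn
        · intro i hi1 hi2
          have hmem : c n - (i : ℤ) ∈ T ∩ B := by
            rw [hTB]
            simp only [hpat, Finset.mem_Ioo]
            omega
          exact decide_eq_true (Finset.mem_inter.mp hmem).1
    have hinj : Set.InjOn (fun T => (T ∩ Sn, T ∩ B))
        ↑((Sn ∪ B).powerset.filter
          fun T => ∀ j < n + 1, ¬ EndsAt ε k (fun i => decide (i ∈ T)) (c j)) := by
      intro T hT T' hT' h
      simp only [Finset.coe_filter, Set.mem_setOf_eq, Finset.mem_powerset] at hT hT'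
      have h1 : T ∩ Sn = T' ∩ Sn := congrArg Prod.fst h
      have h2 : T ∩ B = T' ∩ B := congrArg Prod.snd h
      calc T = T ∩ (Sn ∪ B) := (Finset.inter_eq_left.mpr hT.1).symm
        _ = T ∩ Sn ∪ T ∩ B := Finset.inter_union_distrib_left ..
        _ = T' ∩ Sn ∪ T' ∩ B := by rw [h1, h2]
        _ = T' ∩ (Sn ∪ B) := (Finset.inter_union_distrib_left ..).symm
        _ = T' := Finset.inter_eq_left.mpr hT'.1
    refine le_trans (Finset.card_le_card_of_injOn _ hmaps hinj) ?_
    rw [Finset.card_product,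
      Finset.card_erase_of_mem (Finset.mem_powerset.mpr Finset.Ioo_subset_Ioc_self),
      Finset.card_powerset]
    have hBcard : B.card = ℓ := by
      rw [hB, Int.card_Ioc]
      omega
    rw [hBcard, pow_succ]
    exact Nat.mul_le_mul ih (by omega)

lemma card_left' (ℓ : ℕ) (m : ℤ) (n : ℕ) :
    ((Finset.range n).biUnion fun j =>
      Finset.Ioc ((m - (j : ℤ) * ℓ) - (ℓ : ℤ)) (m - (j : ℤ) * ℓ)).card = n * ℓ := by
  have hl : (0 : ℤ) ≤ (ℓ : ℤ) := Int.natCast_nonneg ℓ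
  have heq : ∀ n : ℕ, ((Finset.range n).biUnion fun j =>
      Finset.Ioc ((m - (j : ℤ) * ℓ) - (ℓ : ℤ)) (m - (j : ℤ) * ℓ))
      = Finset.Ioc (m - (n : ℤ) * ℓ) m := by
    intro n
    induction n with
    | zero => simp
    | succ n ih =>
      rw [Finset.range_add_one, Finset.biUnion_insert, ih]
      have h1 : ((m - (n : ℤ) * ℓ) - (ℓ : ℤ)) = m - ((n : ℕ) + 1 : ℤ) * ℓ := by
        push_cast; ring
      rw [h1]
      have h2 : m - ((n : ℕ) + 1 : ℤ) * ℓ ≤ m - (n : ℤ) * ℓ := by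
        have : ((n : ℕ) + 1 : ℤ) * ℓ = (n : ℤ) * ℓ + ℓ := by ring
        omega
      have h3 : m - (n : ℤ) * ℓ ≤ m := by
        have : (0 : ℤ) ≤ (n : ℤ) * ℓ := mul_nonneg (Int.natCast_nonneg n) hl
        omega
      rw [Finset.Ioc_union_Ioc_eq_Ioc h2 h3]
      congr 2 <;> (push_cast; ring)
  rw [heq n, Int.card_Ioc]
  have h4 : m - (m - (n : ℤ) * ℓ) = ((n * ℓ : ℕ) : ℤ) := by push_cast; ring
  rw [h4, Int.toNat_natCast]

lemma card_right' (ℓ : ℕ) (M : ℤ) (n : ℕ) :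
    ((Finset.range n).biUnion fun j =>
      Finset.Ioc ((M + ((j : ℤ) + 1) * ℓ) - (ℓ : ℤ)) (M + ((j : ℤ) + 1) * ℓ)).card = n * ℓ := by
  have hl : (0 : ℤ) ≤ (ℓ : ℤ) := Int.natCast_nonneg ℓ
  have heq : ∀ n : ℕ, ((Finset.range n).biUnion fun j =>
      Finset.Ioc ((M + ((j : ℤ) + 1) * ℓ) - (ℓ : ℤ)) (M + ((j : ℤ) + 1) * ℓ))
      = Finset.Ioc M (M + (n : ℤ) * ℓ) := by
    intro n
    induction n with
    | zero => simp
    | succ n ih =>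
      rw [Finset.range_add_one, Finset.biUnion_insert, ih]
      have h1 : ((M + ((n : ℤ) + 1) * ℓ) - (ℓ : ℤ)) = M + (n : ℤ) * ℓ := by ring
      rw [h1, Finset.union_comm]
      have h2 : M ≤ M + (n : ℤ) * ℓ := by
        have : (0 : ℤ) ≤ (n : ℤ) * ℓ := mul_nonneg (Int.natCast_nonneg n) hl
        omega
      have h3 : M + (n : ℤ) * ℓ ≤ M + ((n : ℤ) + 1) * ℓ := by
        have : ((n : ℤ) + 1) * ℓ = (n : ℤ) * ℓ + ℓ := by ring
        omega
      rw [Finset.Ioc_union_Ioc_eq_Ioc h2 h3]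
      congr 2 <;> (push_cast; ring)
  rw [heq n, Int.card_Ioc]
  have h4 : M + (n : ℤ) * ℓ - M = ((n * ℓ : ℕ) : ℤ) := by push_cast; ring
  rw [h4, Int.toNat_natCast]

lemma null_of_blocks {ε : ℝ} (hε : 0 < ε) (hμ : IsCoinFlips μ) (k : ℕ) (c : ℕ → ℤ)
    (hcard : ∀ n : ℕ, ((Finset.range n).biUnion fun j =>
      Finset.Ioc (c j - (ell ε k : ℤ)) (c j)).card = n * ell ε k) :
    μ {y | ∀ j : ℕ, ¬ EndsAt ε k y (c j)} = 0 := by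
  classical
  have hℓ : 0 < ell ε k := ell_pos' hε k
  set ℓ := ell ε k with hℓdef
  have hbound : ∀ n : ℕ, μ {y | ∀ j : ℕ, ¬ EndsAt ε k y (c j)}
      ≤ (((2 ^ ℓ - 1 : ℕ) : ℝ≥0∞) * (1 / 2 : ℝ≥0∞) ^ ℓ) ^ n := by
    intro n
    set S := (Finset.range n).biUnion fun j => Finset.Ioc (c j - (ℓ : ℤ)) (c j) with hS
    have hQ : ∀ y y' : ℤ → Bool, (∀ i ∈ S, y i = y' i) →
        (∀ j < n, ¬ EndsAt ε k y (c j)) → (∀ j < n, ¬ EndsAt ε k y' (c j)) := by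
      intro y y' hag hy j hj he
      refine hy j hj (endsAt_congr' hℓ (fun i hi => ?_) he)
      exact (hag i (Finset.mem_biUnion.mpr ⟨j, Finset.mem_range.mpr hj, hi⟩)).symm
    calc μ {y | ∀ j : ℕ, ¬ EndsAt ε k y (c j)}
        ≤ μ {y | ∀ j < n, ¬ EndsAt ε k y (c j)} := measure_mono (fun y hy j _ => hy j)
      _ ≤ (((2 ^ ℓ - 1 : ℕ) : ℝ≥0∞) * (1 / 2 : ℝ≥0∞) ^ ℓ) ^ n := by
          rw [measure_local' hμ S (fun y => ∀ j < n, ¬ EndsAt ε k y (c j)) hQ]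
          have hSc : S.card = n * ℓ := hcard n
          rw [hSc, mul_comm n ℓ, pow_mul, mul_pow]
          refine mul_le_mul_left ?_ _
          have hcf := card_filter_le' hε k c n
          rw [← hℓdef] at hcf
          rw [← hS] at hcf
          rw [← Nat.cast_pow]
          exact Nat.cast_le.mpr (le_trans (le_of_eq (by congr!)) hcf)
  have h20 : ((2 : ℝ≥0∞) ^ ℓ) ≠ 0 := pow_ne_zero ℓ (by norm_num)
  have h2t : ((2 : ℝ≥0∞) ^ ℓ) ≠ ⊤ := ENNReal.pow_ne_top (by norm_num)
  have hr : (((2 ^ ℓ - 1 : ℕ) : ℝ≥0∞) * (1 / 2 : ℝ≥0∞) ^ ℓ) < 1 := by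
    have hhalf : (1 / 2 : ℝ≥0∞) ^ ℓ = ((2 : ℝ≥0∞) ^ ℓ)⁻¹ := by
      rw [one_div, ENNReal.inv_pow]
    rw [hhalf, ← div_eq_mul_inv, ENNReal.div_lt_iff (Or.inl h20) (Or.inl h2t), one_mul]
    have hlt : ((2 ^ ℓ - 1 : ℕ) : ℝ≥0∞) < ((2 ^ ℓ : ℕ) : ℝ≥0∞) := by
      exact_mod_cast Nat.sub_lt (pow_pos (by norm_num) ℓ) one_pos
    calc ((2 ^ ℓ - 1 : ℕ) : ℝ≥0∞) < ((2 ^ ℓ : ℕ) : ℝ≥0∞) := hlt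
      _ = (2 : ℝ≥0∞) ^ ℓ := by push_cast; ring
  have htend := ENNReal.tendsto_pow_atTop_nhds_zero_of_lt_one hr
  have hle : μ {y | ∀ j : ℕ, ¬ EndsAt ε k y (c j)} ≤ 0 :=
    ge_of_tendsto htend (Filter.Eventually.of_forall hbound)
  exact le_antisymm hle (by simp)

lemma left_null' {ε : ℝ} (hε : 0 < ε) (hμ : IsCoinFlips μ) (k : ℕ) (m : ℤ) :
    μ {y | ∀ c : ℤ, c ≤ m → ¬ EndsAt ε k y c} = 0 := by
  have hnull := null_of_blocks hε hμ k (fun j => m - (j : ℤ) * (ell ε k)) (by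
    intro n
    simpa using card_left' (ell ε k) m n)
  refine measure_mono_null ?_ hnull
  intro y hy j
  have h0 : (0 : ℤ) ≤ (j : ℤ) * (ell ε k : ℤ) :=
    mul_nonneg (Int.natCast_nonneg j) (Int.natCast_nonneg _)
  exact hy (m - (j : ℤ) * (ell ε k : ℤ)) (by omega)

lemma right_null' {ε : ℝ} (hε : 0 < ε) (hμ : IsCoinFlips μ) (k : ℕ) (M : ℤ) :
    μ {y | ∀ c : ℤ, M < c → ¬ EndsAt ε k y c} = 0 := by
  have hℓ : 0 < ell ε k := ell_pos' hε k
  have hnull := null_of_blocks hε hμ k (fun j => M + ((j : ℤ) + 1) * (ell ε k)) (by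
    intro n
    simpa using card_right' (ell ε k) M n)
  refine measure_mono_null ?_ hnull
  intro y hy j
  have h1 : (1 : ℤ) ≤ (j : ℤ) + 1 := by
    have := Int.natCast_nonneg j
    omega
  have h2 : (1 : ℤ) ≤ (ell ε k : ℤ) := by exact_mod_cast hℓ
  exact hy (M + ((j : ℤ) + 1) * (ell ε k : ℤ)) (by nlinarith)

lemma middle_null' {ε : ℝ} (hε : 0 < ε) (hμ : IsCoinFlips μ) (m M : ℤ) :
    μ {y | ∀ k : ℕ, ∃ c : ℤ, m < c ∧ c ≤ M ∧ EndsAt ε k y c} = 0 := by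
  have hbound : ∀ n : ℕ, μ {y | ∀ k : ℕ, ∃ c : ℤ, m < c ∧ c ≤ M ∧ EndsAt ε k y c}
      ≤ ((Finset.Ioc m M).card : ℝ≥0∞) * (1 / 2 : ℝ≥0∞) ^ n := by
    intro n
    obtain ⟨k, hk⟩ := ell_unbounded' hε n
    have hsub : {y : ℤ → Bool | ∀ k : ℕ, ∃ c : ℤ, m < c ∧ c ≤ M ∧ EndsAt ε k y c}
        ⊆ ⋃ c ∈ Finset.Ioc m M, {y : ℤ → Bool | EndsAt ε k y c} := by
      intro y hy
      obtain ⟨c, h1, h2, h3⟩ := hy k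
      exact Set.mem_iUnion₂.mpr ⟨c, Finset.mem_Ioc.mpr ⟨h1, h2⟩, h3⟩
    calc μ {y | ∀ k : ℕ, ∃ c : ℤ, m < c ∧ c ≤ M ∧ EndsAt ε k y c}
        ≤ ∑ c ∈ Finset.Ioc m M, μ {y : ℤ → Bool | EndsAt ε k y c} :=
          (measure_mono hsub).trans (measure_biUnion_finset_le _ _)
      _ = ((Finset.Ioc m M).card : ℝ≥0∞) * (1 / 2 : ℝ≥0∞) ^ ell ε k := by
          rw [Finset.sum_congr rfl (fun c _ => measure_endsAt' hε hμ k c),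
            Finset.sum_const, nsmul_eq_mul]
      _ ≤ ((Finset.Ioc m M).card : ℝ≥0∞) * (1 / 2 : ℝ≥0∞) ^ n := by
          refine mul_le_mul_right ?_ _
          exact pow_le_pow_of_le_one (by simp) ENNReal.half_le_self hk
  have hhalf : (1 / 2 : ℝ≥0∞) < 1 := ENNReal.half_lt_self one_ne_zero ENNReal.one_ne_top
  have htend : Filter.Tendsto
      (fun n : ℕ => ((Finset.Ioc m M).card : ℝ≥0∞) * (1 / 2 : ℝ≥0∞) ^ n)
      Filter.atTop (nhds 0) := by
    have h := ENNReal.Tendsto.const_mul (a := ((Finset.Ioc m M).card : ℝ≥0∞))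
      (ENNReal.tendsto_pow_atTop_nhds_zero_of_lt_one hhalf)
      (Or.inr (ENNReal.natCast_ne_top _))
    simpa using h
  exact le_antisymm (ge_of_tendsto htend (Filter.Eventually.of_forall hbound)) (by simp)

lemma exists_block' {ε : ℝ} {k : ℕ} {y : ℤ → Bool} {m M : ℤ} (hmM : m ≤ M)
    (hL : ∃ c : ℤ, c ≤ m ∧ EndsAt ε k y c) (hR : ∃ c : ℤ, M < c ∧ EndsAt ε k y c)
    (hN : ∀ c : ℤ, m < c → c ≤ M → ¬ EndsAt ε k y c) :
    ∃ a b : ℤ, IsBlock ε k y a b ∧ a ≤ m ∧ M < b := by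
  obtain ⟨a, ⟨ham, hae⟩, hamax⟩ := Int.exists_greatest_of_bdd
    (P := fun c => c ≤ m ∧ EndsAt ε k y c) ⟨m, fun z hz => hz.1⟩ hL
  obtain ⟨b, ⟨hMb, hbe⟩, hbmin⟩ := Int.exists_least_of_bdd
    (P := fun c => M < c ∧ EndsAt ε k y c) ⟨M + 1, fun z hz => hz.1⟩ hR
  refine ⟨a, b, ⟨by omega, hae, hbe, ?_⟩, ham, hMb⟩
  intro d had hdb hde
  rcases le_or_gt d m with h | h
  · exact absurd (hamax d ⟨h, hde⟩) (by omega)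
  · rcases le_or_gt d M with h2 | h2
    · exact hN d h h2 hde
    · exact absurd (hbmin d ⟨h2, hde⟩) (by omega)

end Statement13Aux


end BHS

/-- Almost surely, any two integers `s`, `t` lie in a common `k`
block for some `k`. -/
theorem statement13 (ε : ℝ) (hε : ε ∈ Set.Ioo (0 : ℝ) (1 / 2))
    (μ : MeasureTheory.Measure (ℤ → Bool)) (hμ : BHS.IsCoinFlips μ) :
    ∀ᵐ y ∂μ, ∀ s t : ℤ, ∃ (k : ℕ) (a b : ℤ), BHS.IsBlock ε k y a b ∧
      a ≤ s ∧ s < b ∧ a ≤ t ∧ t < b := by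
  have hε0 : 0 < ε := hε.1
  have key : ∀ s t : ℤ, μ {y | ¬ ∃ (k : ℕ) (a b : ℤ), BHS.IsBlock ε k y a b ∧
      a ≤ s ∧ s < b ∧ a ≤ t ∧ t < b} = 0 := by
    intro s t
    set m := min s t with hm
    set M := max s t with hM
    refine measure_mono_null (t :=
        (⋃ k : ℕ, {y : ℤ → Bool | ∀ c : ℤ, c ≤ m → ¬ BHS.EndsAt ε k y c})
      ∪ (⋃ k : ℕ, {y : ℤ → Bool | ∀ c : ℤ, M < c → ¬ BHS.EndsAt ε k y c})
      ∪ {y : ℤ → Bool | ∀ k : ℕ, ∃ c : ℤ, m < c ∧ c ≤ M ∧ BHS.EndsAt ε k y c}) ?_ ?_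
    · intro y hy
      simp only [Set.mem_setOf_eq] at hy
      simp only [Set.mem_union, Set.mem_iUnion, Set.mem_setOf_eq]
      by_cases hL : ∃ k : ℕ, ∀ c : ℤ, c ≤ m → ¬ BHS.EndsAt ε k y c
      · exact Or.inl (Or.inl hL)
      by_cases hR : ∃ k : ℕ, ∀ c : ℤ, M < c → ¬ BHS.EndsAt ε k y c
      · exact Or.inl (Or.inr hR)
      push_neg at hL hR
      refine Or.inr (fun k => ?_)
      by_contra hmid
      push_neg at hmid
      obtain ⟨cl, hcl1, hcl2⟩ := hL k
      obtain ⟨cr, hcr1, hcr2⟩ := hR k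
      obtain ⟨a, b, hblock, ham, hMb⟩ := BHS.exists_block' (min_le_max)
        ⟨cl, hcl1, hcl2⟩ ⟨cr, hcr1, hcr2⟩ hmid
      exact hy ⟨k, a, b, hblock, ham.trans (min_le_left s t),
        lt_of_le_of_lt (le_max_left s t) hMb, ham.trans (min_le_right s t),
        lt_of_le_of_lt (le_max_right s t) hMb⟩
    · refine measure_union_null (measure_union_null ?_ ?_) (BHS.middle_null' hε0 hμ m M)
      · exact measure_iUnion_null fun k => BHS.left_null' hε0 hμ k m
      · exact measure_iUnion_null fun k => BHS.right_null' hε0 hμ k M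
  rw [MeasureTheory.ae_iff]
  refine measure_mono_null ?_
    (measure_iUnion_null fun s : ℤ => measure_iUnion_null fun t : ℤ => key s t)
  intro y hy
  simp only [Set.mem_setOf_eq, not_forall] at hy
  obtain ⟨s, t, hst⟩ := hy
  exact Set.mem_iUnion.mpr ⟨s, Set.mem_iUnion.mpr ⟨t, hst⟩⟩
end
end

section
/- Let (y_j)_{j=1}^{β_k} be i.i.d. uniform on {+1,−1}. Then the probability that the word I_k occurs as a consecutive subword of (y_1,…,y_{β_k}) is at most 1 − (1 − 1/1000)^{1000} + 1000·ℓ_k·2^{−ℓ_k}. -/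
open MeasureTheory
open scoped Classical ENNReal

noncomputable section

namespace S16aux

def chi (A : Finset ℤ) : ℤ → Bool := fun i => decide (i ∈ A)

def Ncnt (S : Finset ℤ) (p : (ℤ → Bool) → Prop) : ℕ :=
  (S.powerset.filter (fun A => p (chi A))).card

def Cyl (S : Finset ℤ) (f : ℤ → Bool) : Set (ℤ → Bool) := {y | ∀ i ∈ S, y i = f i}

lemma measurable_cyl (S : Finset ℤ) (f : ℤ → Bool) : MeasurableSet (Cyl S f) := by
  have h : Cyl S f = ⋂ i ∈ (S : Set ℤ), (fun y : ℤ → Bool => y i) ⁻¹' {f i} := by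
    ext y; simp [Cyl]
  rw [h]
  exact MeasurableSet.biInter S.countable_toSet
    (fun i _ => (measurable_pi_apply i) (measurableSet_singleton _))

lemma meas_eq (μ : MeasureTheory.Measure (ℤ → Bool)) (hμ : BHS.IsCoinFlips μ) (S : Finset ℤ)
    (p : (ℤ → Bool) → Prop)
    (hp : ∀ y z : ℤ → Bool, (∀ i ∈ S, y i = z i) → p y → p z) :
    μ {y | p y} = (Ncnt S p : ℝ≥0∞) * (1/2) ^ S.card := by
  have hset : {y | p y} = ⋃ A ∈ S.powerset.filter (fun A => p (chi A)), Cyl S (chi A) := by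
    ext y
    simp only [Set.mem_setOf_eq, Set.mem_iUnion, Finset.mem_filter,
      Finset.mem_powerset, exists_prop]
    constructor
    · intro hy
      have hag : ∀ i ∈ S, y i = chi (S.filter (fun i => y i = true)) i := by
        intro i hi
        simp only [chi, Finset.mem_filter, hi, true_and]
        cases h : y i <;> simp [h]
      exact ⟨S.filter (fun i => y i = true), ⟨Finset.filter_subset _ _, hp y _ hag hy⟩, hag⟩
    · rintro ⟨A, ⟨hAS, hA⟩, hyA⟩
      exact hp (chi A) y (fun i hi => (hyA i hi).symm) hA
  have hdisj : (↑(S.powerset.filter (fun A => p (chi A))) : Set (Finset ℤ)).PairwiseDisjoint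
      (fun A => Cyl S (chi A)) := by
    intro A hA B hB hAB
    simp only [Finset.coe_filter, Set.mem_setOf_eq, Finset.mem_powerset] at hA hB
    simp only [Function.onFun]
    rw [Set.disjoint_left]
    intro y hyA hyB
    apply hAB
    apply Finset.ext
    intro i
    by_cases hi : i ∈ S
    · have h1 := hyA i hi; have h2 := hyB i hi
      rw [h1] at h2
      simpa only [chi, decide_eq_decide] using h2
    · exact ⟨fun h => absurd (hA.1 h) hi, fun h => absurd (hB.1 h) hi⟩
  rw [hset, measure_biUnion_finset hdisj (fun A _ => measurable_cyl S (chi A))]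
  have h2 : ∀ A ∈ S.powerset.filter (fun A => p (chi A)),
      μ (Cyl S (chi A)) = (1/2 : ℝ≥0∞) ^ S.card := fun A _ => hμ.2 S (chi A)
  rw [Finset.sum_congr rfl h2, Finset.sum_const, nsmul_eq_mul]
  rfl

lemma Ncnt_mul (S T : Finset ℤ) (hd : Disjoint S T) (p q : (ℤ → Bool) → Prop)
    (hp : ∀ y z : ℤ → Bool, (∀ i ∈ S, y i = z i) → p y → p z)
    (hq : ∀ y z : ℤ → Bool, (∀ i ∈ T, y i = z i) → q y → q z) :
    Ncnt (S ∪ T) (fun y => p y ∧ q y) = Ncnt S p * Ncnt T q := by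
  rw [Ncnt, Ncnt, Ncnt, ← Finset.card_product]
  apply Finset.card_bij' (fun A _ => (A ∩ S, A ∩ T)) (fun BC _ => BC.1 ∪ BC.2)
  · intro A hA
    simp only [Finset.mem_filter, Finset.mem_powerset] at hA
    simp only [Finset.mem_product, Finset.mem_filter, Finset.mem_powerset]
    refine ⟨⟨Finset.inter_subset_right, hp (chi A) _ ?_ hA.2.1⟩,
      ⟨Finset.inter_subset_right, hq (chi A) _ ?_ hA.2.2⟩⟩
    · intro i hi; simp [chi, Finset.mem_inter, hi]
    · intro i hi; simp [chi, Finset.mem_inter, hi]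
  · intro BC hBC
    simp only [Finset.mem_product, Finset.mem_filter, Finset.mem_powerset] at hBC
    obtain ⟨⟨hB, hpB⟩, ⟨hC, hqC⟩⟩ := hBC
    simp only [Finset.mem_filter, Finset.mem_powerset]
    refine ⟨Finset.union_subset (hB.trans Finset.subset_union_left)
      (hC.trans Finset.subset_union_right), ?_, ?_⟩
    · apply hp (chi BC.1) _ _ hpB
      intro i hi
      have hiC : i ∉ BC.2 := fun h => Finset.disjoint_left.1 hd hi (hC h)
      simp [chi, Finset.mem_union, hiC]
    · apply hq (chi BC.2) _ _ hqC
      intro i hi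
      have hiB : i ∉ BC.1 := fun h => Finset.disjoint_left.1 hd (hB h) hi
      simp [chi, Finset.mem_union, hiB]
  · intro A hA
    simp only [Finset.mem_filter, Finset.mem_powerset] at hA
    rw [← Finset.inter_union_distrib_left, Finset.inter_eq_left.2 hA.1]
  · intro BC hBC
    simp only [Finset.mem_product, Finset.mem_filter, Finset.mem_powerset] at hBC
    obtain ⟨⟨hB, _⟩, ⟨hC, _⟩⟩ := hBC
    have hCS : BC.2 ∩ S = ∅ := Finset.disjoint_iff_inter_eq_empty.1 (hd.symm.mono_left hC)
    have hBT : BC.1 ∩ T = ∅ := Finset.disjoint_iff_inter_eq_empty.1 (hd.mono_left hB)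
    have h1 : (BC.1 ∪ BC.2) ∩ S = BC.1 := by
      rw [Finset.union_inter_distrib_right, Finset.inter_eq_left.2 hB, hCS, Finset.union_empty]
    have h2 : (BC.1 ∪ BC.2) ∩ T = BC.2 := by
      rw [Finset.union_inter_distrib_right, Finset.inter_eq_left.2 hC, hBT, Finset.empty_union]
    rw [h1, h2]

lemma indep_two (μ : MeasureTheory.Measure (ℤ → Bool)) (hμ : BHS.IsCoinFlips μ)
    (S T : Finset ℤ) (hd : Disjoint S T) (p q : (ℤ → Bool) → Prop)
    (hp : ∀ y z : ℤ → Bool, (∀ i ∈ S, y i = z i) → p y → p z)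
    (hq : ∀ y z : ℤ → Bool, (∀ i ∈ T, y i = z i) → q y → q z) :
    μ {y | p y ∧ q y} = μ {y | p y} * μ {y | q y} := by
  have hpq : ∀ y z : ℤ → Bool, (∀ i ∈ S ∪ T, y i = z i) → (p y ∧ q y) → (p z ∧ q z) := by
    intro y z hag ⟨h1, h2⟩
    exact ⟨hp y z (fun i hi => hag i (Finset.mem_union_left _ hi)) h1,
      hq y z (fun i hi => hag i (Finset.mem_union_right _ hi)) h2⟩
  rw [meas_eq μ hμ (S ∪ T) _ hpq, meas_eq μ hμ S p hp, meas_eq μ hμ T q hq,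
    Ncnt_mul S T hd p q hp hq, Finset.card_union_of_disjoint hd, pow_add]
  push_cast
  ring

lemma indep_many (μ : MeasureTheory.Measure (ℤ → Bool)) (hμ : BHS.IsCoinFlips μ)
    {ι : Type*} (T : ι → Finset ℤ) (p : ι → (ℤ → Bool) → Prop)
    (hp : ∀ i, ∀ y z : ℤ → Bool, (∀ j ∈ T i, y j = z j) → p i y → p i z)
    (s : Finset ι) (hd : (↑s : Set ι).PairwiseDisjoint T) :
    μ {y | ∀ i ∈ s, p i y} = ∏ i ∈ s, μ {y | p i y} := by
  classical
  induction s using Finset.induction_on with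
  | empty =>
    simp only [Finset.notMem_empty, false_implies, implies_true, Set.setOf_true,
      Finset.prod_empty]
    exact measure_univ (μ := μ) (self := hμ.1)
  | @insert a s ha ih =>
    have hd' : (↑s : Set ι).PairwiseDisjoint T :=
      hd.subset (by simp [Finset.coe_insert, Set.subset_insert])
    have hdisj : Disjoint (T a) (s.biUnion T) := by
      rw [Finset.disjoint_biUnion_right]
      intro i hi
      exact hd (by simp) (by simp [hi]) (fun h => ha (h ▸ hi))
    have hset : {y : ℤ → Bool | ∀ i ∈ insert a s, p i y}
        = {y | p a y ∧ ∀ i ∈ s, p i y} := by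
      ext y; simp [Finset.forall_mem_insert]
    rw [hset, indep_two μ hμ (T a) (s.biUnion T) hdisj _ _ (hp a) ?_,
      Finset.prod_insert ha, ih hd']
    intro y z hag hy i hi
    exact hp i y z (fun j hj => hag j (Finset.mem_biUnion.2 ⟨i, hi, hj⟩)) (hy i hi)

end S16aux
namespace S16aux

lemma pow_sub_pow_le (a b : ℝ) (hb : 0 ≤ b) (hba : b ≤ a) (ha : a ≤ 1) (m : ℕ) :
    a ^ m - b ^ m ≤ m * (a - b) := by
  induction m with
  | zero => simp
  | succ m ih =>
    have ha0 : 0 ≤ a := hb.trans hba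
    have h1 : a ^ m ≤ 1 := pow_le_one₀ ha0 ha
    have h2 : b ^ m ≤ 1 := pow_le_one₀ hb (hba.trans ha)
    have h3 : 0 ≤ b ^ m := pow_nonneg hb m
    have h4 : b ^ m ≤ a ^ m := pow_le_pow_left₀ hb hba m
    have key : a ^ (m + 1) - b ^ (m + 1) = a * (a ^ m - b ^ m) + (a - b) * b ^ m := by ring
    rw [key]
    push_cast
    nlinarith

def pat (h : ℤ) : ℤ → Bool := fun i => decide (i ≠ h)

def cylP (n : ℕ) (h : ℤ) : Set (ℤ → Bool) := Cyl (Finset.Icc (h - n + 1) h) (pat h)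

lemma meas_cylP (μ : MeasureTheory.Measure (ℤ → Bool)) (hμ : BHS.IsCoinFlips μ)
    (n : ℕ) (h : ℤ) : μ (cylP n h) = (1/2 : ℝ≥0∞) ^ n := by
  have hc : (Finset.Icc (h - n + 1) h).card = n := by
    rw [Int.card_Icc]; omega
  have := hμ.2 (Finset.Icc (h - n + 1) h) (pat h)
  rw [hc] at this
  exact this

lemma endsAt_mem_cylP (ε : ℝ) (k : ℕ) (y : ℤ → Bool) (h : ℤ)
    (hn1 : 1 ≤ BHS.ell ε k) (hE : BHS.EndsAt ε k y h) : y ∈ cylP (BHS.ell ε k) h := by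
  intro j hj
  rw [Finset.mem_Icc] at hj
  by_cases hjh : j = h
  · subst hjh
    simp only [pat, decide_eq_false_iff_not, not_not]
    simpa [hE.1] using hE.1
  · have hjlt : j < h := lt_of_le_of_ne hj.2 hjh
    set m := (h - j).toNat with hm
    have hmz : (m : ℤ) = h - j := Int.toNat_of_nonneg (by omega)
    have h1 : 1 ≤ m := by omega
    have h2 : m ≤ BHS.ell ε k - 1 := by omega
    have := hE.2 m h1 h2
    have hj' : h - (m : ℤ) = j := by omega
    rw [hj'] at this
    rw [this]
    simp [pat, hjh]

end S16aux

set_option maxHeartbeats 1000000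

/-- Under the i.i.d. fair coin-flip measure, the probability that
`I_k` occurs as a consecutive subword of `(y_1, …, y_{β_k})` is at most
`1 - (1 - 1/1000)^{1000} + 1000·ℓ_k·2^{-ℓ_k}`. -/
theorem statement16 (ε : ℝ) (hε : ε ∈ Set.Ioo (0 : ℝ) (1 / 2)) (k : ℕ) (hk : 1 ≤ k)
    (μ : MeasureTheory.Measure (ℤ → Bool)) (hμ : BHS.IsCoinFlips μ) :
    μ {y | ∃ h : ℤ, (BHS.ell ε k : ℤ) ≤ h ∧ h ≤ (BHS.beta ε k : ℤ) ∧
        BHS.EndsAt ε k y h} ≤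
      ENNReal.ofReal (1 - (1 - 1 / 1000) ^ 1000 +
        1000 * (BHS.ell ε k : ℝ) * (2 : ℝ) ^ (-(BHS.ell ε k : ℝ))) := by
  classical
  haveI : MeasureTheory.IsProbabilityMeasure μ := hμ.1
  open S16aux in
  set n := BHS.ell ε k with hndef
  have hn1 : 1 ≤ n := by
    rw [hndef, BHS.ell]
    exact Nat.one_le_iff_ne_zero.2 (by
      simp only [ne_eq, Nat.ceil_eq_zero, not_le]
      exact pow_pos (by linarith [hε.1]) k)
  have hbeta : BHS.beta ε k = 2 ^ n := rfl
  set L : ℕ := (2 ^ n + 999) / 1000 with hLdef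
  have hb1 : 1 ≤ 2 ^ n := Nat.one_le_two_pow
  have hβL : 2 ^ n ≤ 1000 * L := by omega
  have hL1 : 1 ≤ L := by omega
  have hLle : 1000 * L ≤ 2 ^ n + 999 := by omega
  -- blocks
  set H : ℕ → Finset ℤ := fun i => Finset.Icc ((i : ℤ) * L + n)
    (min (((i : ℤ) + 1) * L) ((2 ^ n : ℕ) : ℤ)) with hHdef
  set T : ℕ → Finset ℤ := fun i => Finset.Ioc ((i : ℤ) * L) (((i : ℤ) + 1) * L) with hTdef
  set W : Set (ℤ → Bool) := ⋃ i ∈ Finset.range 1000, ⋃ h ∈ H i, S16aux.cylP n h with hWdef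
  set Bnd : Set (ℤ → Bool) := ⋃ i ∈ Finset.Icc (1 : ℕ) 999,
    ⋃ h ∈ Finset.Ioo ((i : ℤ) * L) ((i : ℤ) * L + n), S16aux.cylP n h with hBnddef
  -- covering
  have hcover : {y | ∃ h : ℤ, (n : ℤ) ≤ h ∧ h ≤ ((2 ^ n : ℕ) : ℤ) ∧ BHS.EndsAt ε k y h}
      ⊆ W ∪ Bnd := by
    rintro y ⟨h, hh1, hh2, hE⟩
    have hcyl : y ∈ S16aux.cylP n h := S16aux.endsAt_mem_cylP ε k y h hn1 hE
    have hL0 : (0 : ℤ) < (L : ℤ) := by exact_mod_cast hL1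
    set q := (h - 1) / (L : ℤ) with hqdef
    have hmod : 0 ≤ (h - 1) % (L : ℤ) := Int.emod_nonneg _ (ne_of_gt hL0)
    have hmlt : (h - 1) % (L : ℤ) < L := Int.emod_lt_of_pos _ hL0
    have hdm : (L : ℤ) * q + (h - 1) % (L : ℤ) = h - 1 := Int.mul_ediv_add_emod _ _
    have hn0 : (1 : ℤ) ≤ (n : ℤ) := by exact_mod_cast hn1
    have hq0 : 0 ≤ q := Int.ediv_nonneg (by linarith) (le_of_lt hL0)
    have hβ : ((2 ^ n : ℕ) : ℤ) ≤ 1000 * L := by exact_mod_cast hβL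
    have hq1000 : q < 1000 := by nlinarith
    have hiq : ((q.toNat : ℤ)) = q := Int.toNat_of_nonneg hq0
    by_cases hcase : (L : ℤ) * q + n ≤ h
    · left
      rw [hWdef]
      simp only [Set.mem_iUnion, Finset.mem_range, exists_prop]
      refine ⟨q.toNat, by omega, h, ?_, hcyl⟩
      rw [hHdef]
      simp only [Finset.mem_Icc, hiq, le_min_iff]
      constructor
      · rw [mul_comm]; linarith
      · exact ⟨by nlinarith, hh2⟩
    · right
      rw [hBnddef]
      simp only [Set.mem_iUnion, Finset.mem_Icc, Finset.mem_Ioo, exists_prop]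
      have hq1 : 1 ≤ q := by
        by_contra hc
        have : q = 0 := by omega
        rw [this] at hcase
        push_neg at hcase
        simp at hcase
        omega
      refine ⟨q.toNat, ⟨by omega, by omega⟩, h, ⟨?_, ?_⟩, hcyl⟩
      · rw [hiq, mul_comm]; linarith
      · rw [hiq, mul_comm]; linarith
  -- measurability
  have hmeasW : MeasurableSet W :=
    Finset.measurableSet_biUnion _ (fun i _ =>
      Finset.measurableSet_biUnion _ (fun h _ => S16aux.measurable_cyl _ _))
  -- independence setup
  set p : ℕ → (ℤ → Bool) → Prop := fun i y => ∀ h ∈ H i, y ∉ S16aux.cylP n h with hpdef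
  have hsub : ∀ i : ℕ, ∀ h ∈ H i, Finset.Icc (h - n + 1) h ⊆ T i := by
    intro i h hh j hj
    rw [hHdef] at hh
    rw [hTdef]
    simp only [Finset.mem_Icc, le_min_iff] at hh hj ⊢
    rw [Finset.mem_Ioc]
    constructor
    · omega
    · have := hh.2.1; omega
  have hp : ∀ i, ∀ y z : ℤ → Bool, (∀ j ∈ T i, y j = z j) → p i y → p i z := by
    intro i y z hag hy h hh hz
    apply hy h hh
    intro j hj
    rw [hag j (hsub i h hh hj)]
    exact hz j hj
  have hTdisj : (↑(Finset.range 1000) : Set ℕ).PairwiseDisjoint T := by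
    intro i _ j _ hij
    simp only [Function.onFun, hTdef]
    rw [Finset.disjoint_left]
    intro x hxi hxj
    simp only [Finset.mem_Ioc] at hxi hxj
    rcases Nat.lt_or_ge i j with hlt | hge
    · have h1 : ((i : ℤ) + 1) ≤ (j : ℤ) := by exact_mod_cast hlt
      have : ((i : ℤ) + 1) * L ≤ (j : ℤ) * L :=
        mul_le_mul_of_nonneg_right h1 (by positivity)
      linarith [hxi.2, hxj.1]
    · have hlt : j < i := by omega
      have h1 : ((j : ℤ) + 1) ≤ (i : ℤ) := by exact_mod_cast hlt
      have : ((j : ℤ) + 1) * L ≤ (i : ℤ) * L :=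
        mul_le_mul_of_nonneg_right h1 (by positivity)
      linarith [hxj.2, hxi.1]
  -- Wᶜ
  have hWc : Wᶜ = {y | ∀ i ∈ Finset.range 1000, p i y} := by
    rw [hWdef]
    ext y
    simp only [Set.mem_compl_iff, Set.mem_iUnion, exists_prop, not_exists, not_and,
      Set.mem_setOf_eq, hpdef]
  -- the constant c
  set r : ℝ := (1 / 2 : ℝ) ^ n with hrdef
  have hr0 : 0 ≤ r := by positivity
  have hrhalf : r ≤ 1 / 2 := by
    calc r ≤ (1 / 2 : ℝ) ^ 1 := pow_le_pow_of_le_one (by norm_num) (by norm_num) hn1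
    _ = 1 / 2 := pow_one _
  set δ : ℝ := 1 / 1000 + r with hδdef
  have hδ0 : 0 ≤ δ := by positivity
  have hδ1 : δ ≤ 1 := by rw [hδdef]; linarith
  set c : ℝ≥0∞ := ENNReal.ofReal δ with hcdef
  have h12 : ENNReal.ofReal (1 / 2 : ℝ) = (1 / 2 : ℝ≥0∞) := by
    rw [ENNReal.ofReal_div_of_pos (by norm_num), ENNReal.ofReal_one, ENNReal.ofReal_ofNat]
  have hhalf : (1 / 2 : ℝ≥0∞) ^ n = ENNReal.ofReal r := by
    rw [hrdef, ENNReal.ofReal_pow (by norm_num), h12]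
  -- each block bound
  have hblock : ∀ i ∈ Finset.range 1000, 1 - c ≤ μ {y | p i y} := by
    intro i _
    have hcompl : {y | p i y} = (⋃ h ∈ H i, S16aux.cylP n h)ᶜ := by
      ext y
      simp only [Set.mem_setOf_eq, Set.mem_compl_iff, Set.mem_iUnion, exists_prop,
        not_exists, not_and, hpdef]
    have hmeas : MeasurableSet (⋃ h ∈ H i, S16aux.cylP n h) :=
      Finset.measurableSet_biUnion _ (fun h _ => S16aux.measurable_cyl _ _)
    have hcard : (H i).card ≤ L := by
      rw [hHdef]
      simp only []
      rw [Int.card_Icc]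
      have : min (((i : ℤ) + 1) * L) ((2 ^ n : ℕ) : ℤ) ≤ ((i : ℤ) + 1) * L := min_le_left _ _
      have h2 : ((i : ℤ) + 1) * L = (i : ℤ) * L + L := by ring
      omega
    have hUb : μ (⋃ h ∈ H i, S16aux.cylP n h) ≤ c := by
      calc μ (⋃ h ∈ H i, S16aux.cylP n h) ≤ ∑ h ∈ H i, μ (S16aux.cylP n h) :=
            measure_biUnion_finset_le _ _
        _ = (H i).card * (1 / 2 : ℝ≥0∞) ^ n := by
            rw [Finset.sum_congr rfl (fun h _ => S16aux.meas_cylP μ hμ n h),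
              Finset.sum_const, nsmul_eq_mul]
        _ ≤ (L : ℝ≥0∞) * (1 / 2 : ℝ≥0∞) ^ n := by
            exact mul_le_mul_left (by exact_mod_cast Nat.cast_le.2 hcard) _
        _ ≤ c := by
            rw [hhalf, hcdef, ← ENNReal.ofReal_natCast, ← ENNReal.ofReal_mul (by positivity)]
            apply ENNReal.ofReal_le_ofReal
            have hLr : (L : ℝ) ≤ (2 ^ n + 999) / 1000 := by
              have : ((1000 * L : ℕ) : ℝ) ≤ ((2 ^ n + 999 : ℕ) : ℝ) := Nat.cast_le.2 hLle
              push_cast at this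
              linarith
            have hpow : (2 : ℝ) ^ n * r = 1 := by
              rw [hrdef, ← mul_pow]; norm_num
            rw [hδdef]
            nlinarith [pow_nonneg (by norm_num : (0:ℝ) ≤ 2) n]
    rw [hcompl, prob_compl_eq_one_sub hmeas]
    exact tsub_le_tsub_left hUb 1
  -- product
  have hprod : μ Wᶜ = ∏ i ∈ Finset.range 1000, μ {y | p i y} := by
    rw [hWc]
    exact S16aux.indep_many μ hμ T p hp (Finset.range 1000) hTdisj
  have hWcge : ((1 : ℝ≥0∞) - c) ^ 1000 ≤ μ Wᶜ := by
    rw [hprod]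
    calc ((1 : ℝ≥0∞) - c) ^ 1000 = ∏ _i ∈ Finset.range 1000, ((1 : ℝ≥0∞) - c) := by
          rw [Finset.prod_const, Finset.card_range]
      _ ≤ ∏ i ∈ Finset.range 1000, μ {y | p i y} := Finset.prod_le_prod' hblock
  have hWle : μ W ≤ 1 - ((1 : ℝ≥0∞) - c) ^ 1000 := by
    have h1 : μ Wᶜ = 1 - μ W := prob_compl_eq_one_sub hmeasW
    have h2 : μ W = 1 - μ Wᶜ := by
      rw [h1, ENNReal.sub_sub_cancel ENNReal.one_ne_top prob_le_one]
    rw [h2]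
    exact tsub_le_tsub_left hWcge 1
  -- boundary bound
  have hBnd : μ Bnd ≤ 999 * (((n - 1 : ℕ) : ℝ≥0∞) * (1 / 2 : ℝ≥0∞) ^ n) := by
    rw [hBnddef]
    calc μ (⋃ i ∈ Finset.Icc (1:ℕ) 999, ⋃ h ∈ Finset.Ioo ((i:ℤ)*L) ((i:ℤ)*L + n),
          S16aux.cylP n h)
        ≤ ∑ i ∈ Finset.Icc (1:ℕ) 999, μ (⋃ h ∈ Finset.Ioo ((i:ℤ)*L) ((i:ℤ)*L + n),
          S16aux.cylP n h) := measure_biUnion_finset_le _ _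
      _ ≤ ∑ i ∈ Finset.Icc (1:ℕ) 999, (((n - 1 : ℕ) : ℝ≥0∞) * (1 / 2 : ℝ≥0∞) ^ n) := by
          apply Finset.sum_le_sum
          intro i _
          calc μ (⋃ h ∈ Finset.Ioo ((i:ℤ)*L) ((i:ℤ)*L + n), S16aux.cylP n h)
              ≤ ∑ h ∈ Finset.Ioo ((i:ℤ)*L) ((i:ℤ)*L + n), μ (S16aux.cylP n h) :=
                measure_biUnion_finset_le _ _
            _ = ((n - 1 : ℕ) : ℝ≥0∞) * (1 / 2 : ℝ≥0∞) ^ n := by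
                rw [Finset.sum_congr rfl (fun h _ => S16aux.meas_cylP μ hμ n h),
                  Finset.sum_const, nsmul_eq_mul, Int.card_Ioo]
                congr 2
                omega
      _ = 999 * (((n - 1 : ℕ) : ℝ≥0∞) * (1 / 2 : ℝ≥0∞) ^ n) := by
          rw [Finset.sum_const, nsmul_eq_mul]
          norm_num
  -- combine
  have hmain : μ {y | ∃ h : ℤ, (n : ℤ) ≤ h ∧ h ≤ ((2 ^ n : ℕ) : ℤ) ∧ BHS.EndsAt ε k y h}
      ≤ (1 - ((1 : ℝ≥0∞) - c) ^ 1000) + 999 * (((n - 1 : ℕ) : ℝ≥0∞) * (1 / 2 : ℝ≥0∞) ^ n) := by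
    calc μ {y | ∃ h : ℤ, (n : ℤ) ≤ h ∧ h ≤ ((2 ^ n : ℕ) : ℤ) ∧ BHS.EndsAt ε k y h}
        ≤ μ (W ∪ Bnd) := measure_mono hcover
      _ ≤ μ W + μ Bnd := measure_union_le _ _
      _ ≤ _ := add_le_add hWle hBnd
  -- final numeric conversion
  have honec : (1 : ℝ≥0∞) - c = ENNReal.ofReal (1 - δ) := by
    rw [hcdef, ENNReal.ofReal_sub 1 hδ0, ENNReal.ofReal_one]
  have hpow1000 : ((1 : ℝ≥0∞) - c) ^ 1000 = ENNReal.ofReal ((1 - δ) ^ 1000) := by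
    rw [honec, ENNReal.ofReal_pow (by linarith)]
  have hterm1 : (1 : ℝ≥0∞) - ((1 : ℝ≥0∞) - c) ^ 1000
      = ENNReal.ofReal (1 - (1 - δ) ^ 1000) := by
    rw [hpow1000, ENNReal.ofReal_sub 1 (by positivity), ENNReal.ofReal_one]
  have hterm2 : (999 : ℝ≥0∞) * (((n - 1 : ℕ) : ℝ≥0∞) * (1 / 2 : ℝ≥0∞) ^ n)
      = ENNReal.ofReal (999 * (((n - 1 : ℕ) : ℝ) * r)) := by
    rw [hhalf, ← ENNReal.ofReal_natCast (n - 1), ← ENNReal.ofReal_mul (by positivity),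
      ENNReal.ofReal_mul (show (0:ℝ) ≤ 999 by norm_num), ENNReal.ofReal_ofNat]
  rw [hbeta]
  refine le_trans hmain ?_
  have hnonneg : (0:ℝ) ≤ 1 - (1 - δ) ^ 1000 :=
    sub_nonneg.2 (pow_le_one₀ (by linarith) (by linarith))
  rw [hterm1, hterm2, ← ENNReal.ofReal_add hnonneg (by positivity)]
  apply ENNReal.ofReal_le_ofReal
  -- real inequality
  have hrpow : (2 : ℝ) ^ (-(n : ℝ)) = r := by
    rw [Real.rpow_neg (by norm_num), Real.rpow_natCast, hrdef]
    rw [one_div, inv_pow]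
  rw [hrpow]
  have hcast : ((n - 1 : ℕ) : ℝ) = (n : ℝ) - 1 := by
    rw [Nat.cast_sub hn1]; norm_num
  have hkey : (1 - 1/1000 : ℝ) ^ 1000 - (1 - δ) ^ 1000 ≤ 1000 * r := by
    have h := S16aux.pow_sub_pow_le (1 - 1/1000) (1 - δ) (sub_nonneg.2 hδ1)
        (sub_le_sub_left (by rw [hδdef]; exact le_add_of_nonneg_right hr0) 1)
      (by norm_num) 1000
    have h4 : ((1000:ℕ):ℝ) * ((1 - 1/1000) - (1 - δ)) = 1000 * r := by
      rw [hδdef]; push_cast; ring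
    rw [h4] at h
    exact h
  have hnn : (1 : ℝ) ≤ (n : ℝ) := by exact_mod_cast hn1
  have hmul : 0 ≤ ((n : ℝ) - 1) * r := mul_nonneg (sub_nonneg.2 hnn) hr0
  rw [hcast]
  generalize hB : ((1:ℝ) - δ) ^ 1000 = B at hkey ⊢
  generalize hA : ((1:ℝ) - 1/1000) ^ 1000 = A at hkey ⊢
  linarith only [hmul, hkey]
end
end

section
/- There exists K such that for all k ≥ K the following holds. Let (y_j)_{j≥1} be i.i.d. uniform on {+1,−1} and let T = min{ c ≥ ℓ_k : (y_{c−ℓ_k+1},…,y_c)=I_k } be the position at which the first occurrence of I_k ends. Then for every integer j ≥ 0, 2^{−2j−2} < P( jβ_k < T ≤ (j+1)β_k ) < (5/2)^{−j}. -/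
open MeasureTheory
open scoped Classical ENNReal

noncomputable section

namespace S17

def qq (L : ℕ) : ℕ → ℝ
  | 0 => 1
  | n+1 =>
    if h : 1 ≤ L ∧ L ≤ n + 1 then
      qq L n - (1/2 : ℝ)^L * qq L (n + 1 - L)
    else 1
  decreasing_by all_goals omega

lemma qq_zero (L : ℕ) : qq L 0 = 1 := by simp [qq]

lemma qq_low {L n : ℕ} (h : n < L) : qq L n = 1 := by
  cases n with
  | zero => exact qq_zero L
  | succ m => rw [qq]; rw [dif_neg]; omega

lemma qq_rec {L n : ℕ} (h1 : 1 ≤ L) (h2 : L ≤ n + 1) :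
    qq L (n+1) = qq L n - (1/2 : ℝ)^L * qq L (n + 1 - L) := by
  rw [qq, dif_pos ⟨h1, h2⟩]

lemma nat_pow_four_le (n : ℕ) (h : 100 ≤ n) : n^4 ≤ 2^n := by
  induction n, h using Nat.le_induction with
  | base => norm_num
  | succ n hn ih =>
    have h3 : 15*n^3 ≤ n^4 := by
      have h4 : 100 * n^3 ≤ n * n^3 := Nat.mul_le_mul_right _ hn
      have h5 : n * n^3 = n^4 := by ring
      omega
    have h2 : (n+1)^4 ≤ n^4 + 15*n^3 := by nlinarith
    calc (n+1)^4 ≤ n^4 + 15*n^3 := h2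
    _ ≤ 2 * 2^n := by omega
    _ = 2^(n+1) := by ring

section Main

variable {L : ℕ}

def pp (L : ℕ) : ℝ := (1/2 : ℝ)^L
def xx (L : ℕ) : ℝ := pp L * (1 + 1/(L:ℝ))
def lam (L : ℕ) : ℝ := 1 - xx L

lemma pp_pos : 0 < pp L := by simp only [pp]; positivity

lemma hp4 (hL : 100 ≤ L) : (L:ℝ)^4 * pp L ≤ 1 := by
  have h := nat_pow_four_le L hL
  have h2 : ((L:ℝ))^4 ≤ (2:ℝ)^L := by exact_mod_cast h
  have h3 : pp L = ((2:ℝ)^L)⁻¹ := by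
    simp [pp, one_div, inv_pow]
  rw [h3, mul_inv_le_iff₀' (by positivity)]
  simpa using h2

lemma hL0 (hL : 100 ≤ L) : (100:ℝ) ≤ (L:ℝ) := by exact_mod_cast hL

lemma xx_pos (hL : 100 ≤ L) : 0 < xx L := by
  have hc := hL0 hL
  have hp := pp_pos (L := L)
  have hcL : (0:ℝ) < L := by linarith
  have h1 : (0:ℝ) < 1 + 1/(L:ℝ) := by positivity
  exact mul_pos hp h1

lemma xx_le (hL : 100 ≤ L) : xx L ≤ 2 * pp L := by
  have hc := hL0 hL
  have h1 : 1/(L:ℝ) ≤ 1 := by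
    rw [div_le_one (by linarith)]; linarith
  have := pp_pos (L := L)
  unfold xx; nlinarith

lemma pp_small (hL : 100 ≤ L) : pp L ≤ 1/100000000 := by
  have h4 := hp4 hL
  have hc := hL0 hL
  have h5 : (100:ℝ)^4 ≤ (L:ℝ)^4 := by
    apply pow_le_pow_left₀ (by norm_num) hc
  nlinarith [pp_pos (L := L)]

lemma lam_pos (hL : 100 ≤ L) : 0 < lam L := by
  have := xx_le hL
  have := pp_small hL
  have := pp_pos (L := L)
  unfold lam; nlinarith

lemma lam_lt_one (hL : 100 ≤ L) : lam L < 1 := by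
  have := xx_pos hL
  unfold lam; linarith

lemma xx_mul_L (hL : 100 ≤ L) : xx L * (L:ℝ) = pp L * ((L:ℝ) + 1) := by
  have hc := hL0 hL
  have hcL : (0:ℝ) < L := by linarith
  unfold xx; field_simp

/-- the key root inequality `p ≤ lam^(L-1) * x` -/
lemma key_root (hL : 100 ≤ L) : pp L ≤ lam L ^ (L-1) * xx L := by
  have hc := hL0 hL
  have hx := xx_pos hL
  have hxle := xx_le hL
  have hps := pp_small hL
  have hpp := pp_pos (L := L)
  have h4 := hp4 hL
  have hcL : (0:ℝ) < L := by linarith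
  have hxval := xx_mul_L hL
  have hb : 1 + (L-1 : ℕ) * (-(xx L)) ≤ (1 + (-(xx L)))^(L-1 : ℕ) := by
    apply one_add_mul_le_pow
    nlinarith
  have hb' : 1 - ((L:ℝ)-1) * xx L ≤ lam L ^ (L-1) := by
    have h1 : 1 ≤ L := by omega
    have hcast : ((L-1 : ℕ) : ℝ) = (L:ℝ) - 1 := by
      push_cast [Nat.cast_sub h1]; ring
    calc 1 - ((L:ℝ)-1) * xx L = 1 + ((L-1:ℕ):ℝ) * (-(xx L)) := by rw [hcast]; ring
    _ ≤ (1 + (-(xx L)))^(L-1) := hb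
    _ = lam L ^ (L-1) := by unfold lam; ring_nf
  -- (x - p) * L = p
  have hxp : (xx L - pp L) * (L:ℝ) = pp L := by nlinarith
  have hx2 : xx L ^ 2 ≤ 4 * pp L ^ 2 := by nlinarith
  have h42 : 4 * (L:ℝ)^2 * pp L ≤ 1 := by nlinarith [sq_nonneg ((L:ℝ)^2 - 2)]
  -- (L-1) * x^2 ≤ p / L
  have h6 : ((L:ℝ)-1) * xx L ^ 2 * (L:ℝ) ≤ pp L := by nlinarith
  have h5 : pp L ≤ (1 - ((L:ℝ)-1) * xx L) * xx L := by nlinarith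
  calc pp L ≤ (1 - ((L:ℝ)-1) * xx L) * xx L := h5
  _ ≤ lam L ^ (L-1) * xx L := by
      apply mul_le_mul_of_nonneg_right hb' (le_of_lt hx)

lemma qq_rec' (hL : 100 ≤ L) {n : ℕ} (h2 : L ≤ n + 1) :
    qq L (n+1) = qq L n - pp L * qq L (n + 1 - L) :=
  qq_rec (by omega) h2

/-- main two-sided invariant -/
lemma qq_inv (hL : 100 ≤ L) :
    ∀ n, 0 ≤ qq L n - lam L ^ n ∧
      lam L * (qq L n - lam L ^ n) ≤ qq L (n+1) - lam L ^ (n+1) := by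
  have hlam0 := lam_pos (L := L) hL
  have hlam1 := lam_lt_one (L := L) hL
  have hxx := xx_pos (L := L) hL
  have hpp := pp_pos (L := L)
  have hkey := key_root (L := L) hL
  intro n
  induction n using Nat.strong_induction_on with
  | _ n ih =>
  have hfirst : 0 ≤ qq L n - lam L ^ n := by
    cases n with
    | zero => simp [qq_zero]
    | succ m =>
      have h1 := (ih m (by omega)).1
      have h2 := (ih m (by omega)).2
      nlinarith
  refine ⟨hfirst, ?_⟩
  by_cases hc : L ≤ n + 1
  · -- recursion case
    have hn1 : 1 ≤ n + 1 - L + 1 := by omega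
    have hrec := qq_rec' hL (n := n) hc
    have hnL : n + 1 - L < n := by omega
    have he' : 0 ≤ qq L (n+1-L) - lam L ^ (n+1-L) := (ih _ hnL).1
    -- chain
    have chain : ∀ j, j ≤ n →
        lam L ^ j * (qq L (n-j) - lam L ^ (n-j)) ≤ qq L n - lam L ^ n := by
      intro j
      induction j with
      | zero => intro _; simp
      | succ i hi =>
        intro hij
        have h1 := hi (by omega)
        have h2 := (ih (n - (i+1)) (by omega)).2
        have h3 : n - (i+1) + 1 = n - i := by omega
        rw [h3] at h2
        calc lam L ^ (i+1) * (qq L (n-(i+1)) - lam L ^ (n-(i+1)))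
            = lam L ^ i * (lam L * (qq L (n-(i+1)) - lam L ^ (n-(i+1)))) := by ring
        _ ≤ lam L ^ i * (qq L (n-i) - lam L ^ (n-i)) := by
            apply mul_le_mul_of_nonneg_left h2 (pow_nonneg (le_of_lt hlam0) i)
        _ ≤ qq L n - lam L ^ n := h1
    have hchain := chain (L-1) (by omega)
    have hidx : n - (L-1) = n + 1 - L := by omega
    rw [hidx] at hchain
    -- pow identities
    have hpow1 : lam L ^ n = lam L ^ (n+1-L) * lam L ^ (L-1) := by
      rw [← pow_add]; congr 1; omega
    have hpow2 : lam L ^ (n+1) = lam L ^ (n+1-L) * lam L ^ (L-1) * lam L := by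
      calc lam L ^ (n+1) = lam L ^ ((n+1-L) + (L-1) + 1) := by congr 1; omega
      _ = lam L ^ (n+1-L) * lam L ^ (L-1) * lam L := by rw [pow_add, pow_add, pow_one]
    -- the two multiplicative bounds
    have hb1 : pp L * (qq L (n+1-L) - lam L ^ (n+1-L)) ≤ xx L * (qq L n - lam L ^ n) := by
      calc pp L * (qq L (n+1-L) - lam L ^ (n+1-L))
          ≤ (lam L ^ (L-1) * xx L) * (qq L (n+1-L) - lam L ^ (n+1-L)) := by
            apply mul_le_mul_of_nonneg_right hkey he'
      _ = xx L * (lam L ^ (L-1) * (qq L (n+1-L) - lam L ^ (n+1-L))) := by ring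
      _ ≤ xx L * (qq L n - lam L ^ n) :=
            mul_le_mul_of_nonneg_left hchain (le_of_lt hxx)
    have hb2 : pp L * lam L ^ (n+1-L) ≤ xx L * lam L ^ n := by
      have h0 : (0:ℝ) ≤ lam L ^ (n+1-L) := pow_nonneg (le_of_lt hlam0) _
      calc pp L * lam L ^ (n+1-L) ≤ (lam L ^ (L-1) * xx L) * lam L ^ (n+1-L) := by
            apply mul_le_mul_of_nonneg_right hkey h0
      _ = xx L * lam L ^ n := by rw [hpow1]; ring
    -- key algebraic identity
    have key0 : qq L (n+1) - lam L ^ (n+1) - lam L * (qq L n - lam L ^ n)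
        = xx L * qq L n - pp L * qq L (n+1-L) := by
      rw [hrec, hpow2, hpow1]
      unfold lam
      ring
    nlinarith [key0, hb1, hb2]
  · -- flat case
    have h1 : qq L n = 1 := qq_low (by omega)
    have h2 : qq L (n+1) = 1 := qq_low (by omega)
    have hpow : lam L ^ (n+1) = lam L ^ n * lam L := by rw [pow_succ]
    have hln : (0:ℝ) ≤ lam L ^ n := pow_nonneg (le_of_lt hlam0) n
    nlinarith [h1, h2, hpow, hln, hlam1]

lemma qq_ge (hL : 100 ≤ L) (n : ℕ) : lam L ^ n ≤ qq L n := by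
  have := (qq_inv hL n).1; linarith

lemma qq_nonneg (hL : 100 ≤ L) (n : ℕ) : 0 ≤ qq L n :=
  le_trans (pow_nonneg (le_of_lt (lam_pos (L := L) hL)) n) (qq_ge hL n)

lemma qq_mono (hL : 100 ≤ L) (n : ℕ) : qq L (n+1) ≤ qq L n := by
  by_cases hc : L ≤ n + 1
  · rw [qq_rec' hL hc]
    have := qq_nonneg hL (n+1-L)
    have := pp_pos (L := L)
    nlinarith
  · rw [qq_low (show n < L by omega), qq_low (show n+1 < L by omega)]

lemma qq_anti (hL : 100 ≤ L) {m n : ℕ} (h : m ≤ n) : qq L n ≤ qq L m := by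
  induction n, h using Nat.le_induction with
  | base => exact le_refl _
  | succ n hmn ih => exact le_trans (qq_mono hL n) ih

lemma qq_le_one (hL : 100 ≤ L) (n : ℕ) : qq L n ≤ 1 := by
  have := qq_anti hL (Nat.zero_le n); rwa [qq_zero] at this

lemma qq_ident (hL : 100 ≤ L) :
    ∀ m, qq L (L - 1 + m) = 1 - pp L * ∑ i ∈ Finset.range m, qq L i := by
  intro m
  induction m with
  | zero => simp [qq_low (show L - 1 < L by omega)]
  | succ m ih =>
    have h1 : L - 1 + (m+1) = (L - 1 + m) + 1 := by omega
    have h2 : L ≤ (L - 1 + m) + 1 := by omega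
    have h3 : L - 1 + m + 1 - L = m := by omega
    rw [h1, qq_rec' hL h2, h3, ih, Finset.sum_range_succ]
    ring


section Numeric

variable {L : ℕ}

lemma exp_neg_one_le : Real.exp (-1) ≤ 37/100 := by
  have h9 := Real.exp_one_gt_d9
  have hpos := Real.exp_pos 1
  have : (Real.exp 1)⁻¹ * Real.exp 1 = 1 := inv_mul_cancel₀ (ne_of_gt hpos)
  rw [Real.exp_neg]
  nlinarith [inv_pos.mpr hpos]

lemma exp_neg_65_ge : (3/10 : ℝ) ≤ Real.exp (-(6/5)) := by
  have h1 : Real.exp (6/5) ≤ 10/3 := by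
    have h5 : Real.exp (6/5) ^ (5:ℕ) = Real.exp 6 := by
      rw [← Real.exp_nat_mul]; norm_num
    have h6 : Real.exp 6 = Real.exp 1 ^ (6:ℕ) := by
      rw [← Real.exp_nat_mul]; norm_num
    have h9 := Real.exp_one_lt_d9
    have hp : Real.exp 1 ^ (6:ℕ) ≤ 2.7182818286 ^ (6:ℕ) :=
      pow_le_pow_left₀ (le_of_lt (Real.exp_pos 1)) (le_of_lt h9) 6
    have hnum : (2.7182818286:ℝ) ^ (6:ℕ) ≤ (10/3 : ℝ)^(5:ℕ) := by norm_num
    apply le_of_pow_le_pow_left₀ (n := 5) (by norm_num) (by norm_num)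
    calc Real.exp (6/5) ^ (5:ℕ) = Real.exp 6 := h5
    _ = Real.exp 1 ^ (6:ℕ) := h6
    _ ≤ 2.7182818286 ^ (6:ℕ) := hp
    _ ≤ (10/3:ℝ)^(5:ℕ) := hnum
  have h2 : Real.exp (-(6/5)) * Real.exp (6/5) = 1 := by
    rw [← Real.exp_add]; norm_num
  nlinarith [Real.exp_pos (-(6/5)), Real.exp_pos (6/5)]

lemma beta_mul_pp (L : ℕ) : ((2^L : ℕ) : ℝ) * pp L = 1 := by
  have : pp L = ((2:ℝ)^L)⁻¹ := by simp [pp, one_div, inv_pow]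
  rw [this]
  push_cast
  rw [mul_inv_cancel₀ (by positivity)]

lemma twoL_le (hL : 100 ≤ L) : 2*L + 2 ≤ 2^L := by
  have h := nat_pow_four_le L hL
  have h2 : 4*L ≤ L*L := Nat.mul_le_mul_right L (by omega)
  have h3 : L^2 ≤ L^4 := Nat.pow_le_pow_right (by omega) (by omega)
  have h4 : L*L = L^2 := by ring
  omega

lemma lam_le_exp : lam L ≤ Real.exp (-(xx L)) := by
  have := Real.add_one_le_exp (-(xx L))
  unfold lam; linarith

lemma lam_ge_exp (hL : 100 ≤ L) : Real.exp (-(xx L / (1 - xx L))) ≤ lam L := by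
  have hlam0 := lam_pos (L := L) hL
  have h1x : 0 < 1 - xx L := by unfold lam at hlam0; linarith
  have h1 := Real.add_one_le_exp (xx L / (1 - xx L))
  have h2 : xx L / (1 - xx L) + 1 = (1 - xx L)⁻¹ := by field_simp; ring
  rw [h2] at h1
  have h3 : Real.exp (-(xx L / (1 - xx L))) = (Real.exp (xx L / (1 - xx L)))⁻¹ :=
    Real.exp_neg _
  rw [h3]
  have h4 : (0:ℝ) < (1 - xx L)⁻¹ := by positivity
  have h5 := inv_anti₀ h4 h1
  rw [inv_inv] at h5
  unfold lam
  exact h5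

/-- `lam^{2^L} ≥ 3/10` -/
lemma lam_pow_beta (hL : 100 ≤ L) : (3/10 : ℝ) ≤ lam L ^ (2^L) := by
  have hlam0 := lam_pos (L := L) hL
  have h1x : 0 < 1 - xx L := by unfold lam at hlam0; linarith
  have hxx := xx_pos (L := L) hL
  have hxle := xx_le (L := L) hL
  have hpps := pp_small (L := L) hL
  have hpp := pp_pos (L := L)
  have hc := hL0 (L := L) hL
  have hbp := beta_mul_pp L
  have hxL := xx_mul_L (L := L) hL
  have hcpos : (0:ℝ) < L := by linarith
  -- β * xx = (L+1)/L ≤ 1.01 ; t = xx/(1-xx) ; β * t ≤ 6/5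
  have hbxx : ((2^L : ℕ):ℝ) * xx L * (L:ℝ) = (L:ℝ) + 1 := by
    calc ((2^L : ℕ):ℝ) * xx L * (L:ℝ) = ((2^L:ℕ):ℝ) * (xx L * (L:ℝ)) := by ring
    _ = ((2^L:ℕ):ℝ) * (pp L * ((L:ℝ)+1)) := by rw [hxL]
    _ = (((2^L:ℕ):ℝ) * pp L) * ((L:ℝ)+1) := by ring
    _ = (L:ℝ) + 1 := by rw [hbp]; ring
  have hbt : ((2^L:ℕ):ℝ) * (xx L / (1 - xx L)) ≤ 6/5 := by
    rw [← mul_div_assoc, div_le_iff₀ h1x]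
    have hβxx : ((2^L:ℕ):ℝ) * xx L ≤ 101/100 := by
      have heq : ((2^L:ℕ):ℝ) * xx L = ((L:ℝ)+1)/(L:ℝ) := by
        field_simp at hbxx ⊢; linarith [hbxx]
      rw [heq, div_le_iff₀ hcpos]; linarith
    nlinarith
  have h1 : lam L ^ (2^L) ≥ Real.exp (-(xx L / (1 - xx L))) ^ (2^L) := by
    apply pow_le_pow_left₀ (le_of_lt (Real.exp_pos _)) (lam_ge_exp hL)
  have h2 : Real.exp (-(xx L / (1 - xx L))) ^ (2^L)
      = Real.exp (((2^L:ℕ):ℝ) * (-(xx L / (1 - xx L)))) := by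
    rw [Real.exp_nat_mul]
  have h3 : Real.exp (((2^L:ℕ):ℝ) * (-(xx L / (1 - xx L)))) ≥ Real.exp (-(6/5)) := by
    apply Real.exp_le_exp.mpr
    nlinarith [hbt]
  calc (3/10:ℝ) ≤ Real.exp (-(6/5)) := exp_neg_65_ge
  _ ≤ Real.exp (((2^L:ℕ):ℝ) * (-(xx L / (1 - xx L)))) := h3
  _ = Real.exp (-(xx L / (1 - xx L))) ^ (2^L) := h2.symm
  _ ≤ lam L ^ (2^L) := h1

/-- the M·x ≥ 1 condition, M = 2^L - 2L + 1 -/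
lemma Mxx_ge_one (hL : 100 ≤ L) : (1:ℝ) ≤ ((2^L - 2*L + 1 : ℕ):ℝ) * xx L := by
  have h2L := twoL_le hL
  have hbp := beta_mul_pp L
  have hxL := xx_mul_L (L := L) hL
  have hc := hL0 (L := L) hL
  have hpp := pp_pos (L := L)
  have h4 := hp4 (L := L) hL
  have hcast : ((2^L - 2*L + 1 : ℕ):ℝ) = ((2^L:ℕ):ℝ) - 2*(L:ℝ) + 1 := by
    push_cast [Nat.cast_sub (by omega : 2*L ≤ 2^L)]; ring
  rw [hcast]
  have hxx : xx L * (L:ℝ) = pp L * ((L:ℝ)+1) := hxL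
  -- ((β - 2L + 1) xx) L = (β xx)L - (2L-1) xx L = (L+1) - (2L-1)(L+1)pp/L... use nlinarith
  have hcpos : (0:ℝ) < L := by linarith
  have hkey : (((2^L:ℕ):ℝ) - 2*(L:ℝ) + 1) * xx L * (L:ℝ)
      = ((L:ℝ)+1) * (1 - (2*(L:ℝ) - 1) * pp L) := by
    have hb : ((2^L:ℕ):ℝ) * (xx L * (L:ℝ)) = ((L:ℝ)+1) := by
      rw [hxx]; nlinarith [hbp]
    nlinarith [hxx, hb]
  have hsmall : (2*(L:ℝ) - 1) * pp L * ((L:ℝ)+1) ≤ 1 := by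
    nlinarith [sq_nonneg ((L:ℝ) - 2)]
  nlinarith [hkey, hsmall]

/-- upper bound `qq (2^L - L) ≤ 39/100` -/
lemma qq_upper (hL : 100 ≤ L) : qq L (2^L - L) ≤ 39/100 := by
  have h2L := twoL_le hL
  set M := 2^L - 2*L + 1 with hM
  have hidx : L - 1 + M = 2^L - L := by omega
  have hident := qq_ident hL M
  rw [hidx] at hident
  have hpp := pp_pos (L := L)
  have hxx := xx_pos (L := L) hL
  have hlam0 := lam_pos (L := L) hL
  have hlam1 := lam_lt_one (L := L) hL
  have hc := hL0 (L := L) hL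
  -- sum lower bound by geometric
  have hsum : ∑ i ∈ Finset.range M, lam L ^ i ≤ ∑ i ∈ Finset.range M, qq L i :=
    Finset.sum_le_sum (fun i _ => qq_ge hL i)
  have hgeo : ∑ i ∈ Finset.range M, lam L ^ i = (1 - lam L ^ M)/(xx L) := by
    rw [geom_sum_eq (ne_of_lt hlam1) M]
    have hx0 : xx L ≠ 0 := ne_of_gt hxx
    have : lam L - 1 = -(xx L) := by unfold lam; ring
    rw [this, div_neg, ← neg_div]
    congr 1
    ring
  -- lam^M ≤ exp(-1) ≤ 37/100
  have hlamM : lam L ^ M ≤ 37/100 := by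
    have h1 : lam L ^ M ≤ Real.exp (-(xx L)) ^ M :=
      pow_le_pow_left₀ (le_of_lt hlam0) lam_le_exp M
    have h2 : Real.exp (-(xx L)) ^ M = Real.exp ((M:ℝ) * (-(xx L))) := by
      rw [Real.exp_nat_mul]
    have h3 : Real.exp ((M:ℝ) * (-(xx L))) ≤ Real.exp (-1) := by
      apply Real.exp_le_exp.mpr
      have := Mxx_ge_one hL
      nlinarith
    calc lam L ^ M ≤ Real.exp (-(xx L)) ^ M := h1
    _ = Real.exp ((M:ℝ) * (-(xx L))) := h2
    _ ≤ Real.exp (-1) := h3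
    _ ≤ 37/100 := exp_neg_one_le
  -- pp/xx = L/(L+1) ≥ 100/101
  have hxL := xx_mul_L (L := L) hL
  have hcpos : (0:ℝ) < L := by linarith
  have hfrac : pp L / xx L = (L:ℝ)/((L:ℝ)+1) := by
    rw [div_eq_div_iff (ne_of_gt hxx) (by positivity)]
    nlinarith [hxL]
  have hlamMpos : 0 ≤ lam L ^ M := pow_nonneg (le_of_lt hlam0) M
  have hbig : 61/100 ≤ pp L * ((1 - lam L ^ M)/(xx L)) := by
    have h1 : pp L * ((1 - lam L ^ M)/(xx L)) = (pp L / xx L) * (1 - lam L ^ M) := by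
      field_simp
    rw [h1, hfrac]
    have h2 : (100:ℝ)/101 ≤ (L:ℝ)/((L:ℝ)+1) := by
      rw [div_le_div_iff₀ (by norm_num) (by positivity)]
      linarith
    have h3 : (63:ℝ)/100 ≤ 1 - lam L ^ M := by linarith
    nlinarith
  have hfin : pp L * ((1 - lam L ^ M)/(xx L)) ≤ pp L * ∑ i ∈ Finset.range M, qq L i := by
    rw [← hgeo]
    exact mul_le_mul_of_nonneg_left hsum (le_of_lt hpp)
  rw [hident]
  linarith

end Numeric

end Main

def cylSet (s : Finset ℤ) (f : ℤ → Bool) : Set (ℤ → Bool) := {y | ∀ i ∈ s, y i = f i}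

lemma cylSet_measurable (s : Finset ℤ) (f : ℤ → Bool) : MeasurableSet (cylSet s f) := by
  have h : cylSet s f = ⋂ i ∈ s, ((fun y : ℤ → Bool => y i) ⁻¹' {f i}) := by
    ext y; simp [cylSet]
  rw [h]
  exact MeasurableSet.biInter (Set.to_countable _)
    (fun i _ => (measurable_pi_apply i) (measurableSet_singleton (f i)))

def DetBy (P : (ℤ → Bool) → Prop) (s : Finset ℤ) : Prop :=
  ∀ y z : ℤ → Bool, (∀ i ∈ s, y i = z i) → P y → P z

lemma DetBy.mono {P s} (h : DetBy P s) {s' : Finset ℤ} (hs : s ⊆ s') : DetBy P s' :=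
  fun y z hyz => h y z (fun i hi => hyz i (hs hi))

lemma DetBy.inter {P Q s} (hP : DetBy P s) (hQ : DetBy Q s) :
    DetBy (fun y => P y ∧ Q y) s :=
  fun y z hyz hpq => ⟨hP y z hyz hpq.1, hQ y z hyz hpq.2⟩

variable {μ : Measure (ℤ → Bool)}

/-- decomposition/product lemma : a set determined by `s` is independent of a
cylinder on `t`, when `s` and `t` are disjoint. -/
theorem det_inter_cyl
    (hcyl : ∀ (s : Finset ℤ) (f : ℤ → Bool),
      μ {y | ∀ i ∈ s, y i = f i} = (1/2 : ℝ≥0∞) ^ s.card)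
    (s t : Finset ℤ) (hst : Disjoint s t)
    (P : (ℤ → Bool) → Prop)
    (hdet : DetBy P s)
    (hm : MeasurableSet {y | P y}) (g : ℤ → Bool) :
    μ ({y | P y} ∩ cylSet t g) = μ {y | P y} * (1/2 : ℝ≥0∞) ^ t.card := by
  classical
  set F : ({i // i ∈ s} → Bool) → (ℤ → Bool) :=
    fun w i => if h : i ∈ s then w ⟨i, h⟩ else g i with hF
  set W : Finset ({i // i ∈ s} → Bool) := Finset.univ.filter (fun w => P (F w)) with hW
  have hagree : ∀ (y : ℤ → Bool) (w), (∀ i ∈ s, y i = F w i) → (P y ↔ P (F w)) :=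
    fun y w hy => ⟨hdet y (F w) hy, hdet (F w) y (fun i hi => (hy i hi).symm)⟩
  have hrestr : ∀ y : ℤ → Bool, ∀ i (hi : i ∈ s), F (fun j => y j.1) i = y i := by
    intro y i hi; simp [hF, hi]
  have key0 : {y | P y} = ⋃ w ∈ W, cylSet s (F w) := by
    ext y
    simp only [Set.mem_setOf_eq, Set.mem_iUnion, hW, Finset.mem_filter,
      Finset.mem_univ, true_and]
    constructor
    · intro hy
      refine ⟨fun j => y j.1,
        (hagree y (fun j => y j.1) (fun i hi => (hrestr y i hi).symm)).mp hy,
        fun i hi => (hrestr y i hi).symm⟩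
    · rintro ⟨w, hPw, hyw⟩
      exact (hagree y w hyw).mpr hPw
  have key1 : {y | P y} ∩ cylSet t g = ⋃ w ∈ W, cylSet (s ∪ t) (F w) := by
    ext y
    simp only [Set.mem_inter_iff, Set.mem_setOf_eq, Set.mem_iUnion, hW,
      Finset.mem_filter, Finset.mem_univ, true_and]
    constructor
    · rintro ⟨hy, hyt⟩
      refine ⟨fun j => y j.1,
        (hagree y (fun j => y j.1) (fun i hi => (hrestr y i hi).symm)).mp hy, ?_⟩
      intro i hi
      rcases Finset.mem_union.mp hi with his | hit
      · exact (hrestr y i his).symm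
      · have : i ∉ s := fun his => (Finset.disjoint_left.mp hst his) hit
        have hni : F (fun j => y j.1) i = g i := by simp only [hF, dif_neg this]
        rw [hni]
        exact hyt i hit
    · rintro ⟨w, hPw, hyw⟩
      constructor
      · exact (hagree y w (fun i hi => hyw i (Finset.mem_union_left t hi))).mpr hPw
      · intro i hit
        have his : i ∉ s := fun his => (Finset.disjoint_left.mp hst his) hit
        have h3 := hyw i (Finset.mem_union_right s hit)
        have hni : F w i = g i := by simp only [hF, dif_neg his]
        rw [hni] at h3
        exact h3
  -- pairwise disjointness
  have hpd : ∀ (u : Finset ℤ), s ⊆ u →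
      (W : Set ({i // i ∈ s} → Bool)).PairwiseDisjoint (fun w => cylSet u (F w)) := by
    intro u hsu w _ w' _ hne
    apply Set.disjoint_left.mpr
    intro y hy hy'
    apply hne
    funext j
    have h1 := hy j.1 (hsu j.2)
    have h2 := hy' j.1 (hsu j.2)
    simp only [hF, dif_pos j.2] at h1 h2
    rw [← h1, ← h2]
  have hcount : ∀ (u : Finset ℤ), s ⊆ u →
      μ (⋃ w ∈ W, cylSet u (F w)) = W.card * (1/2 : ℝ≥0∞) ^ u.card := by
    intro u hsu
    rw [measure_biUnion_finset (hpd u hsu) (fun w _ => cylSet_measurable u (F w))]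
    have : ∀ w ∈ W, μ (cylSet u (F w)) = (1/2 : ℝ≥0∞) ^ u.card :=
      fun w _ => hcyl u (F w)
    rw [Finset.sum_congr rfl this, Finset.sum_const, nsmul_eq_mul]
  have h0 : μ {y | P y} = W.card * (1/2 : ℝ≥0∞) ^ s.card := by
    rw [key0]; exact hcount s (Finset.Subset.refl s)
  have h1 : μ ({y | P y} ∩ cylSet t g) = W.card * (1/2 : ℝ≥0∞) ^ (s ∪ t).card := by
    rw [key1]; exact hcount (s ∪ t) Finset.subset_union_left
  rw [h0, h1, Finset.card_union_of_disjoint hst, pow_add, mul_assoc]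



-- aliases matching names used downstream
lemma qq_low' {L n : ℕ} (h : n < L) : qq L n = 1 := qq_low h
lemma qq_rec'2 {L : ℕ} (hL : 100 ≤ L) {n : ℕ} (h2 : L ≤ n + 1) :
    qq L (n+1) = qq L n - (1/2:ℝ)^L * qq L (n + 1 - L) := qq_rec (by omega) h2
lemma qq_rec'' {L : ℕ} (hL : 100 ≤ L) {n : ℕ} (h2 : L ≤ n + 1) :
    qq L (n+1) = qq L n - (1/2:ℝ)^L * qq L (n + 1 - L) := qq_rec'2 hL h2
lemma qq_nonneg' {L : ℕ} (hL : 100 ≤ L) (n : ℕ) : 0 ≤ qq L n := qq_nonneg hL n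
lemma qq_low2 {L n : ℕ} (h : n < L) : qq L n = 1 := qq_low h
lemma qq_rec2 {L : ℕ} (hL : 100 ≤ L) {n : ℕ} (h2 : L ≤ n + 1) :
    qq L (n+1) = qq L n - (1/2:ℝ)^L * qq L (n + 1 - L) := qq_rec'2 hL h2
lemma qq_nonneg2 {L : ℕ} (hL : 100 ≤ L) (n : ℕ) : 0 ≤ qq L n := qq_nonneg hL n
lemma qq_nonneg3 {L : ℕ} (hL : 100 ≤ L) (n : ℕ) : 0 ≤ qq L n := qq_nonneg hL n
lemma qq_zero3 (L : ℕ) : qq L 0 = 1 := qq_zero L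
lemma qq_anti3 {L : ℕ} (hL : 100 ≤ L) {m n : ℕ} (h : m ≤ n) : qq L n ≤ qq L m := qq_anti hL h

def EndsAt (L : ℕ) (y : ℤ → Bool) (c : ℤ) : Prop :=
  y c = false ∧ ∀ i : ℕ, 1 ≤ i → i ≤ L - 1 → y (c - (i:ℤ)) = true

def G (L : ℕ) (c : ℤ) : Set (ℤ → Bool) := {y | EndsAt L y c}

def Ee (L : ℕ) (a : ℤ) (n : ℕ) : Set (ℤ → Bool) :=
  {y | ∀ c : ℤ, a + L ≤ c → c ≤ a + n → ¬ EndsAt L y c}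

lemma G_eq_cyl {L : ℕ} (hL : 1 ≤ L) (c : ℤ) :
    G L c = cylSet (Finset.Icc (c - L + 1) c) (fun i => decide (i ≠ c)) := by
  ext y
  simp only [G, cylSet, Set.mem_setOf_eq, Finset.mem_Icc, EndsAt]
  constructor
  · rintro ⟨h0, h1⟩ i ⟨hi1, hi2⟩
    by_cases hic : i = c
    · subst hic; simp [h0]
    · have h2 : (1:ℤ) ≤ c - i := by omega
      set j : ℕ := (c - i).toNat with hj
      have hji : (j:ℤ) = c - i := Int.toNat_of_nonneg (by omega)
      have h4 := h1 j (by omega) (by omega)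
      have hcj : c - (j:ℤ) = i := by omega
      rw [hcj] at h4
      simp [hic, h4]
  · intro h
    constructor
    · have := h c ⟨by omega, le_refl c⟩
      simpa using this
    · intro i hi1 hi2
      have hic : c - (i:ℤ) ≠ c := by omega
      have := h (c - i) ⟨by omega, by omega⟩
      simpa [hic] using this

lemma G_measurable {L : ℕ} (hL : 1 ≤ L) (c : ℤ) : MeasurableSet (G L c) := by
  rw [G_eq_cyl hL]; exact cylSet_measurable _ _

lemma Ee_measurable {L : ℕ} (hL : 1 ≤ L) (a : ℤ) (n : ℕ) : MeasurableSet (Ee L a n) := by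
  have h : Ee L a n = ⋂ (c : ℤ), ⋂ (_ : a + L ≤ c ∧ c ≤ a + n), (G L c)ᶜ := by
    ext y
    simp only [Ee, Set.mem_setOf_eq, Set.mem_iInter, Set.mem_compl_iff, G]
    constructor
    · intro hy c hc; exact hy c hc.1 hc.2
    · intro hy c h1 h2; exact hy c ⟨h1, h2⟩
  rw [h]
  exact MeasurableSet.iInter fun c =>
    MeasurableSet.iInter fun _ => (G_measurable hL c).compl

lemma endsAt_det {L : ℕ} (hL : 1 ≤ L) (c : ℤ) :
    DetBy (fun y => EndsAt L y c) (Finset.Icc (c - L + 1) c) := by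
  rintro y z hyz ⟨h0, h1⟩
  constructor
  · rw [← hyz c (by simp only [Finset.mem_Icc]; omega)]; exact h0
  · intro i hi1 hi2
    rw [← hyz (c - i) (by simp only [Finset.mem_Icc]; omega)]
    exact h1 i hi1 hi2

lemma Ee_det {L : ℕ} (hL : 1 ≤ L) (a : ℤ) (n : ℕ) :
    DetBy (· ∈ Ee L a n) (Finset.Icc (a+1) (a+n)) := by
  intro y z hyz hy c hc1 hc2 hEz
  apply hy c hc1 hc2
  apply endsAt_det hL c z y _ hEz
  intro i hi
  simp only [Finset.mem_Icc] at hi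
  exact (hyz i (by simp only [Finset.mem_Icc]; omega)).symm

lemma Ee_univ {L : ℕ} {a : ℤ} {n : ℕ} (hn : n < L) : Ee L a n = Set.univ := by
  ext y
  simp only [Ee, Set.mem_setOf_eq, Set.mem_univ, iff_true]
  intro c h1 h2
  exfalso; omega

lemma Ee_mono {L : ℕ} (a : ℤ) {m n : ℕ} (h : m ≤ n) : Ee L a n ⊆ Ee L a m := by
  intro y hy c h1 h2
  exact hy c h1 (by omega)

lemma Ee_step {L : ℕ} (hL : 1 ≤ L) (a : ℤ) (n : ℕ) (h : L ≤ n + 1) :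
    Ee L a n = Ee L a (n+1) ∪ (Ee L a (n+1-L) ∩ G L (a + (n+1))) := by
  ext y
  simp only [Set.mem_union, Set.mem_inter_iff]
  constructor
  · intro hy
    by_cases hE : EndsAt L y (a + (n+1))
    · right
      exact ⟨fun c hc1 hc2 => hy c hc1 (by omega), hE⟩
    · left
      intro c hc1 hc2
      by_cases hc : c = a + (n+1)
      · exact fun hEy => hE (hc ▸ hEy)
      · exact hy c hc1 (by omega)
  · intro hy c hc1 hc2
    rcases hy with hy | ⟨hy1, hyG⟩
    · exact hy c hc1 (by omega)
    · by_cases hcs : c ≤ a + ((n+1-L : ℕ) : ℤ)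
      · exact hy1 c hc1 hcs
      · intro hE
        set i : ℕ := (a + ((n:ℤ)+1) - c).toNat with hi
        have hii : (i:ℤ) = a + ((n:ℤ)+1) - c := by
          rw [hi]; exact Int.toNat_of_nonneg (by omega)
        have h4 := hyG.2 i (by omega) (by omega)
        have hcc : a + ((n:ℤ)+1) - (i:ℤ) = c := by omega
        rw [hcc] at h4
        rw [hE.1] at h4
        exact Bool.false_ne_true h4

lemma Ee_step_disj {L : ℕ} (hL : 1 ≤ L) (a : ℤ) (n : ℕ) (h : L ≤ n + 1) :
    Disjoint (Ee L a (n+1)) (Ee L a (n+1-L) ∩ G L (a + (n+1))) := by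
  rw [Set.disjoint_left]
  rintro y hy ⟨-, hyG⟩
  exact hy (a + (n+1)) (by omega) (by omega) hyG

lemma Ee_inter_G {L : ℕ} (hL : 1 ≤ L) (a : ℤ) (n : ℕ) (h : L ≤ n + 1) :
    Ee L a n ∩ G L (a + (n+1)) = Ee L a (n+1-L) ∩ G L (a + (n+1)) := by
  rw [Ee_step hL a n h, Set.union_inter_distrib_right]
  have h1 : Ee L a (n+1) ∩ G L (a + (n+1)) = ∅ := by
    rw [Set.eq_empty_iff_forall_notMem]
    rintro y ⟨hy, hyG⟩
    exact hy (a + (n+1)) (by omega) (by omega) hyG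
  rw [h1, Set.empty_union, Set.inter_assoc, Set.inter_self]

section Meas

variable {μ : Measure (ℤ → Bool)} (hprob : IsProbabilityMeasure μ)
  (hcyl : ∀ (s : Finset ℤ) (f : ℤ → Bool),
    μ {y | ∀ i ∈ s, y i = f i} = (1/2 : ℝ≥0∞) ^ s.card)

lemma half_pow (L : ℕ) : (1/2 : ℝ≥0∞)^L = ENNReal.ofReal ((1/2:ℝ)^L) := by
  rw [ENNReal.ofReal_pow (by norm_num)]
  congr 1
  rw [ENNReal.ofReal_div_of_pos (by norm_num)]
  norm_num

lemma card_IccL {L : ℕ} (c : ℤ) : (Finset.Icc (c - L + 1) c).card = L := by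
  rw [Int.card_Icc]
  omega

include hcyl in
lemma meas_G {L : ℕ} (hL : 1 ≤ L) (c : ℤ) : μ (G L c) = (1/2 : ℝ≥0∞)^L := by
  rw [G_eq_cyl hL]
  have := hcyl (Finset.Icc (c - L + 1) c) (fun i => decide (i ≠ c))
  rw [card_IccL] at this
  exact this

include hcyl in
/-- An event determined by `[1, b-L]` is independent of the pattern-occurrence
cylinder at `b`. -/
lemma meas_inter_G {L : ℕ} (hL : 1 ≤ L) (P : (ℤ → Bool) → Prop) (b : ℤ)
    (hdet : DetBy P (Finset.Icc 1 (b - L)))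
    (hm : MeasurableSet {y | P y}) :
    μ ({y | P y} ∩ G L b) = μ {y | P y} * (1/2 : ℝ≥0∞)^L := by
  rw [G_eq_cyl hL]
  have hst : Disjoint (Finset.Icc 1 (b - L)) (Finset.Icc (b - L + 1) b) := by
    rw [Finset.disjoint_left]
    intro i hi hit
    simp only [Finset.mem_Icc] at hi hit
    omega
  have := det_inter_cyl hcyl (Finset.Icc 1 (b - L)) (Finset.Icc (b - L + 1) b)
    hst P hdet hm (fun i => decide (i ≠ b))
  rw [card_IccL] at this
  exact this

include hprob hcyl in
lemma meas_Ee {L : ℕ} (hL : 100 ≤ L) (a : ℤ) (ha : 0 ≤ a) :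
    ∀ n : ℕ, μ (Ee L a n) = ENNReal.ofReal (qq L n) := by
  have hL1 : 1 ≤ L := by omega
  intro n
  induction n using Nat.strong_induction_on with
  | _ n ih =>
  by_cases hn : n < L
  · rw [Ee_univ hn, qq_low' hn, measure_univ, ENNReal.ofReal_one]
  · obtain ⟨m, rfl⟩ : ∃ m, n = m + 1 := ⟨n - 1, by omega⟩
    have hLm : L ≤ m + 1 := by omega
    have hstep := Ee_step hL1 a m hLm
    have hdisj := Ee_step_disj hL1 a m hLm
    have hmeas2 : MeasurableSet (Ee L a (m+1-L) ∩ G L (a + (m+1))) :=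
      (Ee_measurable hL1 a (m+1-L)).inter (G_measurable hL1 _)
    have hunion : μ (Ee L a m) = μ (Ee L a (m+1)) + μ (Ee L a (m+1-L) ∩ G L (a + (m+1))) := by
      rw [hstep, measure_union hdisj hmeas2]
    -- compute the second term
    have hdet : DetBy (· ∈ Ee L a (m+1-L)) (Finset.Icc 1 (a + ((m:ℤ)+1) - L)) := by
      apply (Ee_det hL1 a (m+1-L)).mono
      intro i hi
      simp only [Finset.mem_Icc] at hi ⊢
      omega
    have hsec : μ (Ee L a (m+1-L) ∩ G L (a + ((m:ℤ)+1))) =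
        ENNReal.ofReal (qq L (m+1-L)) * (1/2 : ℝ≥0∞)^L := by
      have h5 := meas_inter_G hcyl hL1 (· ∈ Ee L a (m+1-L)) (a + ((m:ℤ)+1))
        hdet (Ee_measurable hL1 a (m+1-L))
      simp only [Set.setOf_mem_eq] at h5
      rw [ih (m+1-L) (by omega)] at h5
      exact h5
    rw [ih m (by omega), hsec, half_pow] at hunion
    have hq : qq L m = qq L (m+1) + (1/2:ℝ)^L * qq L (m+1-L) := by
      have := qq_rec'' hL (n := m) hLm
      linarith
    have hnn1 : 0 ≤ qq L (m+1) := qq_nonneg' hL _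
    have hnn2 : (0:ℝ) ≤ (1/2:ℝ)^L * qq L (m+1-L) := by
      have := qq_nonneg' hL (m+1-L); positivity
    rw [hq, ENNReal.ofReal_add hnn1 hnn2, ENNReal.ofReal_mul (by positivity)] at hunion
    have hfin : ENNReal.ofReal (qq L (m+1-L)) * ENNReal.ofReal ((1/2:ℝ)^L) ≠ ∞ :=
      ENNReal.mul_ne_top ENNReal.ofReal_ne_top ENNReal.ofReal_ne_top
    rw [mul_comm (ENNReal.ofReal ((1/2:ℝ)^L))] at hunion
    rw [add_comm (ENNReal.ofReal (qq L (m+1)))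
        (ENNReal.ofReal (qq L (m+1-L)) * ENNReal.ofReal ((1/2:ℝ)^L)),
      add_comm (μ (Ee L a (m+1)))
        (ENNReal.ofReal (qq L (m+1-L)) * ENNReal.ofReal ((1/2:ℝ)^L))] at hunion
    exact ((ENNReal.add_right_inj hfin).mp hunion).symm

end Meas



variable {μ : Measure (ℤ → Bool)} (hprob : IsProbabilityMeasure μ)
  (hcyl : ∀ (s : Finset ℤ) (f : ℤ → Bool),
    μ {y | ∀ i ∈ s, y i = f i} = (1/2 : ℝ≥0∞) ^ s.card)



include hprob hcyl in
lemma meas_Ee_inter {L : ℕ} (hL : 100 ≤ L) (m : ℕ) :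
    ∀ n : ℕ, μ (Ee L 0 m ∩ Ee L (m:ℤ) n) = ENNReal.ofReal (qq L m * qq L n) := by
  have hL1 : 1 ≤ L := by omega
  intro n
  induction n using Nat.strong_induction_on with
  | _ n ih =>
  by_cases hn : n < L
  · rw [Ee_univ hn, Set.inter_univ, qq_low2 hn, mul_one]
    exact meas_Ee hprob hcyl hL 0 (le_refl 0) m
  · obtain ⟨r, rfl⟩ : ∃ r, n = r + 1 := ⟨n - 1, by omega⟩
    have hLr : L ≤ r + 1 := by omega
    have hstep := Ee_step hL1 (m:ℤ) r hLr
    have hunion : Ee L 0 m ∩ Ee L (m:ℤ) r =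
        (Ee L 0 m ∩ Ee L (m:ℤ) (r+1)) ∪
          ((Ee L 0 m ∩ Ee L (m:ℤ) (r+1-L)) ∩ G L ((m:ℤ) + ((r:ℤ)+1))) := by
      rw [hstep, Set.inter_union_distrib_left]
      congr 1
      rw [← Set.inter_assoc]
    have hdisj : Disjoint (Ee L 0 m ∩ Ee L (m:ℤ) (r+1))
        ((Ee L 0 m ∩ Ee L (m:ℤ) (r+1-L)) ∩ G L ((m:ℤ) + ((r:ℤ)+1))) := by
      have := Ee_step_disj hL1 (m:ℤ) r hLr
      refine Disjoint.mono ?_ ?_ this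
      · exact Set.inter_subset_right
      · rw [Set.inter_assoc]; exact Set.inter_subset_right
    have hmeasA : MeasurableSet (Ee L 0 m ∩ Ee L (m:ℤ) (r+1-L)) :=
      (Ee_measurable hL1 0 m).inter (Ee_measurable hL1 (m:ℤ) (r+1-L))
    have hmeas2 : MeasurableSet ((Ee L 0 m ∩ Ee L (m:ℤ) (r+1-L)) ∩ G L ((m:ℤ) + ((r:ℤ)+1))) :=
      hmeasA.inter (G_measurable hL1 _)
    have hEq : μ (Ee L 0 m ∩ Ee L (m:ℤ) r) =
        μ (Ee L 0 m ∩ Ee L (m:ℤ) (r+1)) +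
        μ ((Ee L 0 m ∩ Ee L (m:ℤ) (r+1-L)) ∩ G L ((m:ℤ) + ((r:ℤ)+1))) := by
      rw [hunion, measure_union hdisj hmeas2]
    -- determinedness of the inner intersection
    have hdet : DetBy (· ∈ Ee L 0 m ∩ Ee L (m:ℤ) (r+1-L))
        (Finset.Icc 1 ((m:ℤ) + ((r:ℤ)+1) - L)) := by
      have h1 : DetBy (· ∈ Ee L 0 m) (Finset.Icc 1 ((m:ℤ) + ((r:ℤ)+1) - L)) := by
        apply (Ee_det hL1 0 m).mono
        intro i hi; simp only [Finset.mem_Icc] at hi ⊢; omega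
      have h2 : DetBy (· ∈ Ee L (m:ℤ) (r+1-L)) (Finset.Icc 1 ((m:ℤ) + ((r:ℤ)+1) - L)) := by
        apply (Ee_det hL1 (m:ℤ) (r+1-L)).mono
        intro i hi; simp only [Finset.mem_Icc] at hi ⊢; omega
      intro y z hyz hy
      exact ⟨h1 y z hyz hy.1, h2 y z hyz hy.2⟩
    have hsec : μ ((Ee L 0 m ∩ Ee L (m:ℤ) (r+1-L)) ∩ G L ((m:ℤ) + ((r:ℤ)+1))) =
        ENNReal.ofReal (qq L m * qq L (r+1-L)) * (1/2 : ℝ≥0∞)^L := by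
      have h5 := meas_inter_G hcyl hL1 (· ∈ Ee L 0 m ∩ Ee L (m:ℤ) (r+1-L))
        ((m:ℤ) + ((r:ℤ)+1)) hdet hmeasA
      simp only [Set.setOf_mem_eq] at h5
      rw [ih (r+1-L) (by omega)] at h5
      exact h5
    rw [ih r (by omega), hsec, half_pow] at hEq
    have hq : qq L m * qq L r =
        qq L m * qq L (r+1) + (1/2:ℝ)^L * (qq L m * qq L (r+1-L)) := by
      have h8 := qq_rec2 hL (n := r) hLr
      rw [h8]; ring
    have hnn1 : 0 ≤ qq L m * qq L (r+1) :=
      mul_nonneg (qq_nonneg2 hL m) (qq_nonneg2 hL _)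
    have hnn2 : (0:ℝ) ≤ (1/2:ℝ)^L * (qq L m * qq L (r+1-L)) := by
      have h6 := qq_nonneg2 hL (r+1-L)
      have h7 := qq_nonneg2 hL m
      exact mul_nonneg (by positivity) (mul_nonneg h7 h6)
    rw [hq, ENNReal.ofReal_add hnn1 hnn2,
      ENNReal.ofReal_mul (p := (1/2:ℝ)^L) (by positivity)] at hEq
    have hfin : ENNReal.ofReal (qq L m * qq L (r+1-L)) * ENNReal.ofReal ((1/2:ℝ)^L) ≠ ∞ :=
      ENNReal.mul_ne_top ENNReal.ofReal_ne_top ENNReal.ofReal_ne_top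
    rw [mul_comm (ENNReal.ofReal ((1/2:ℝ)^L))] at hEq
    rw [add_comm (ENNReal.ofReal (qq L m * qq L (r+1)))
        (ENNReal.ofReal (qq L m * qq L (r+1-L)) * ENNReal.ofReal ((1/2:ℝ)^L)),
      add_comm (μ (Ee L 0 m ∩ Ee L (m:ℤ) (r+1)))
        (ENNReal.ofReal (qq L m * qq L (r+1-L)) * ENNReal.ofReal ((1/2:ℝ)^L))] at hEq
    exact ((ENNReal.add_right_inj hfin).mp hEq).symm

include hprob hcyl in
lemma qq_submul {L : ℕ} (hL : 100 ≤ L) (m n : ℕ) :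
    qq L (m + n) ≤ qq L m * qq L n := by
  have hL1 : 1 ≤ L := by omega
  have hsub : Ee L 0 (m+n) ⊆ Ee L 0 m ∩ Ee L (m:ℤ) n := by
    intro y hy
    refine ⟨Ee_mono 0 (by omega) hy, ?_⟩
    intro c hc1 hc2
    exact hy c (by omega) (by omega)
  have h1 := measure_mono (μ := μ) hsub
  rw [meas_Ee hprob hcyl hL 0 (le_refl 0) (m+n), meas_Ee_inter hprob hcyl hL m n] at h1
  rwa [ENNReal.ofReal_le_ofReal_iff
    (mul_nonneg (qq_nonneg2 hL m) (qq_nonneg2 hL n))] at h1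







include hprob hcyl in
lemma qq_pow {L : ℕ} (hL : 100 ≤ L) (d : ℕ) : ∀ j : ℕ, qq L (j * d) ≤ qq L d ^ j := by
  intro j
  induction j with
  | zero => simp [qq_zero3]
  | succ i ih =>
    have h1 : (i+1) * d = i * d + d := by ring
    rw [h1, pow_succ]
    calc qq L (i * d + d) ≤ qq L (i * d) * qq L d := qq_submul hprob hcyl hL _ _
    _ ≤ qq L d ^ i * qq L d :=
        mul_le_mul_of_nonneg_right ih (qq_nonneg3 hL d)

def FirstAt (L m : ℕ) : Set (ℤ → Bool) := Ee L 0 (m-1) ∩ G L (m:ℤ)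

lemma FirstAt_measurable {L : ℕ} (hL1 : 1 ≤ L) (m : ℕ) : MeasurableSet (FirstAt L m) :=
  (Ee_measurable hL1 0 (m-1)).inter (G_measurable hL1 _)

include hprob hcyl in
lemma meas_FirstAt {L : ℕ} (hL : 100 ≤ L) {m : ℕ} (hm : L ≤ m) :
    μ (FirstAt L m) = ENNReal.ofReal (qq L (m - L) * (1/2:ℝ)^L) := by
  have hL1 : 1 ≤ L := by omega
  have h1 : FirstAt L m = Ee L 0 (m - L) ∩ G L (m:ℤ) := by
    have h2 := Ee_inter_G hL1 0 (m-1) (show L ≤ (m-1)+1 by omega)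
    have h4 : (m-1)+1-L = m-L := by omega
    have h3 : (0:ℤ) + ((↑(m-1):ℤ) + 1) = (m:ℤ) := by omega
    rw [h4, h3] at h2
    exact h2
  rw [h1]
  have hdet : DetBy (· ∈ Ee L 0 (m-L)) (Finset.Icc 1 ((m:ℤ) - L)) := by
    apply (Ee_det hL1 0 (m-L)).mono
    intro i hi; simp only [Finset.mem_Icc] at hi ⊢; omega
  have h5 := meas_inter_G hcyl hL1 (· ∈ Ee L 0 (m-L)) (m:ℤ) hdet (Ee_measurable hL1 0 (m-L))
  simp only [Set.setOf_mem_eq] at h5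
  rw [meas_Ee hprob hcyl hL 0 (le_refl 0) (m-L), half_pow,
    ← ENNReal.ofReal_mul (qq_nonneg3 hL (m-L))] at h5
  exact h5

lemma FirstAt_disj {L : ℕ} (hL1 : 1 ≤ L) {m m' : ℕ} (hm : L ≤ m) (hm' : L ≤ m')
    (hne : m ≠ m') : Disjoint (FirstAt L m) (FirstAt L m') := by
  have key : ∀ {a b : ℕ}, L ≤ a → a < b → Disjoint (FirstAt L a) (FirstAt L b) := by
    intro a b ha hab
    rw [Set.disjoint_left]
    rintro y ⟨hyE, hyG⟩ ⟨hyE', hyG'⟩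
    exact hyE' (a:ℤ) (by omega) (by omega) hyG
  rcases hne.lt_or_gt with h | h
  · exact key hm h
  · exact (key hm' h).symm

def Mset (L β j : ℕ) : Finset ℕ := (Finset.Ioc (j*β) ((j+1)*β)).filter (fun m => L ≤ m)

lemma event_eq (L β j : ℕ) (hL1 : 1 ≤ L) :
    {y : ℤ → Bool | ∃ h : ℤ, (L:ℤ) ≤ h ∧ EndsAt L y h ∧
        (∀ c : ℤ, (L:ℤ) ≤ c → c < h → ¬ EndsAt L y c) ∧
        (j:ℤ) * (β:ℤ) < h ∧ h ≤ ((j:ℤ) + 1) * (β:ℤ)} =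
      ⋃ m ∈ Mset L β j, FirstAt L m := by
  ext y
  simp only [Set.mem_setOf_eq, Set.mem_iUnion, Mset, Finset.mem_filter, Finset.mem_Ioc,
    FirstAt, Set.mem_inter_iff, exists_prop]
  constructor
  · rintro ⟨h, hLh, hE, hno, hlo, hhi⟩
    have hmZ : ((h.toNat : ℕ) : ℤ) = h := Int.toNat_of_nonneg (by omega)
    refine ⟨h.toNat, ⟨⟨?_, ?_⟩, ?_⟩, ?_, ?_⟩
    · have : (j:ℤ) * (β:ℤ) = ((j * β : ℕ) : ℤ) := by push_cast; ring
      rw [this, ← hmZ] at hlo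
      exact_mod_cast hlo
    · have : ((j:ℤ) + 1) * (β:ℤ) = (((j+1) * β : ℕ) : ℤ) := by push_cast; ring
      rw [this, ← hmZ] at hhi
      exact_mod_cast hhi
    · have : (L:ℤ) ≤ ((h.toNat : ℕ) : ℤ) := by rw [hmZ]; exact hLh
      exact_mod_cast this
    · intro c hc1 hc2
      exact hno c (by omega) (by omega)
    · show EndsAt L y ((h.toNat : ℕ) : ℤ)
      rw [hmZ]; exact hE
  · rintro ⟨m, ⟨⟨hlo, hhi⟩, hLm⟩, hyE, hyG⟩
    refine ⟨(m:ℤ), by exact_mod_cast hLm, hyG, ?_, ?_, ?_⟩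
    · intro c hc1 hc2
      exact hyE c (by omega) (by omega)
    · have : ((j * β : ℕ) : ℤ) < (m:ℤ) := by exact_mod_cast hlo
      push_cast at this ⊢
      linarith
    · have : (m:ℤ) ≤ (((j+1) * β : ℕ) : ℤ) := by exact_mod_cast hhi
      push_cast at this ⊢
      linarith

include hprob hcyl in
lemma meas_event {L : ℕ} (hL : 100 ≤ L) (β j : ℕ) :
    μ (⋃ m ∈ Mset L β j, FirstAt L m) =
      ∑ m ∈ Mset L β j, ENNReal.ofReal (qq L (m - L) * (1/2:ℝ)^L) := by
  have hL1 : 1 ≤ L := by omega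
  rw [measure_biUnion_finset ?disj (fun m _ => FirstAt_measurable hL1 m)]
  · apply Finset.sum_congr rfl
    intro m hm
    simp only [Mset, Finset.mem_filter] at hm
    exact meas_FirstAt hprob hcyl hL hm.2
  case disj =>
    intro a ha b hb hne
    simp only [Mset, Finset.coe_filter, Set.mem_setOf_eq] at ha hb
    exact FirstAt_disj hL1 ha.2 hb.2 hne


end S17

/-- There is `K` such that for all `k ≥ K` and every `j ≥ 0`, the
position `T` at which the first occurrence of `I_k` (in `(y_j)_{j ≥ 1}`) ends
satisfies `2^{-2j-2} < P(jβ_k < T ≤ (j+1)β_k) < (5/2)^{-j}`. -/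
theorem statement17 (ε : ℝ) (hε : ε ∈ Set.Ioo (0 : ℝ) (1 / 2)) :
    ∃ K : ℕ, ∀ k : ℕ, K ≤ k →
      ∀ μ : MeasureTheory.Measure (ℤ → Bool), BHS.IsCoinFlips μ →
      ∀ j : ℕ,
        ENNReal.ofReal ((2 : ℝ) ^ (-(2 * j : ℝ) - 2)) <
          μ {y | ∃ h : ℤ, (BHS.ell ε k : ℤ) ≤ h ∧ BHS.EndsAt ε k y h ∧
              (∀ c : ℤ, (BHS.ell ε k : ℤ) ≤ c → c < h → ¬ BHS.EndsAt ε k y c) ∧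
              (j * BHS.beta ε k : ℤ) < h ∧ h ≤ ((j + 1) * BHS.beta ε k : ℤ)} ∧
        μ {y | ∃ h : ℤ, (BHS.ell ε k : ℤ) ≤ h ∧ BHS.EndsAt ε k y h ∧
              (∀ c : ℤ, (BHS.ell ε k : ℤ) ≤ c → c < h → ¬ BHS.EndsAt ε k y c) ∧
              (j * BHS.beta ε k : ℤ) < h ∧ h ≤ ((j + 1) * BHS.beta ε k : ℤ)} <
          ENNReal.ofReal ((5 / 2 : ℝ) ^ (-(j : ℝ))) := by
  classical
  have h1ε : (1:ℝ) < 1 + ε := by have := hε.1; linarith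
  obtain ⟨K, hK⟩ : ∃ K : ℕ, (100:ℝ) < (1+ε)^K := pow_unbounded_of_one_lt (100:ℝ) h1ε
  refine ⟨K, ?_⟩
  intro k hk μ hμ j
  obtain ⟨hprob, hcyl⟩ := hμ
  have hL : 100 ≤ BHS.ell ε k := by
    have h2 : ((1+ε):ℝ)^K ≤ (1+ε)^k := pow_le_pow_right₀ (by linarith) hk
    have h3 : ((1+ε):ℝ)^k ≤ (⌈(1+ε)^k⌉₊ : ℝ) := Nat.le_ceil _
    have h4 : (100:ℝ) ≤ (BHS.ell ε k : ℝ) := by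
      have : (BHS.ell ε k : ℝ) = (⌈(1+ε)^k⌉₊ : ℝ) := rfl
      rw [this]; linarith
    exact_mod_cast h4
  set L := BHS.ell ε k with hLdef
  set β := BHS.beta ε k with hβdef
  have hβ : β = 2^L := rfl
  have hL1 : 1 ≤ L := by omega
  have hLβ : 2*L + 2 ≤ β := by rw [hβ]; exact S17.twoL_le hL
  have hlam0 : 0 < S17.lam L := S17.lam_pos hL
  have hlam1 : S17.lam L < 1 := S17.lam_lt_one hL
  have hpp : 0 < S17.pp L := S17.pp_pos
  have hppdef : S17.pp L = (1/2:ℝ)^L := rfl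
  have hsetU : {y : ℤ → Bool | ∃ h : ℤ, (BHS.ell ε k : ℤ) ≤ h ∧ BHS.EndsAt ε k y h ∧
        (∀ c : ℤ, (BHS.ell ε k : ℤ) ≤ c → c < h → ¬ BHS.EndsAt ε k y c) ∧
        (j * BHS.beta ε k : ℤ) < h ∧ h ≤ ((j + 1) * BHS.beta ε k : ℤ)} =
      ⋃ m ∈ S17.Mset L β j, S17.FirstAt L m := S17.event_eq L β j hL1
  have hμev : μ (⋃ m ∈ S17.Mset L β j, S17.FirstAt L m)
      = ∑ m ∈ S17.Mset L β j, ENNReal.ofReal (S17.qq L (m - L) * (1/2:ℝ)^L) :=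
    S17.meas_event hprob hcyl hL β j
  rw [hsetU]
  constructor
  · -- lower bound
    rw [hμev]
    set T := (j+1)*β with hT
    have hTexp : T = j*β + β := by rw [hT]; ring
    have hsub2 : Finset.Icc (j*β + L) T ⊆ S17.Mset L β j := by
      intro m hm
      simp only [Finset.mem_Icc] at hm
      simp only [S17.Mset, Finset.mem_filter, Finset.mem_Ioc]
      omega
    have hstep1 : ∑ m ∈ Finset.Icc (j*β + L) T,
          ENNReal.ofReal (S17.qq L (T - L) * (1/2:ℝ)^L)
        ≤ ∑ m ∈ S17.Mset L β j, ENNReal.ofReal (S17.qq L (m - L) * (1/2:ℝ)^L) := by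
      calc ∑ m ∈ Finset.Icc (j*β + L) T, ENNReal.ofReal (S17.qq L (T - L) * (1/2:ℝ)^L)
          ≤ ∑ m ∈ Finset.Icc (j*β + L) T, ENNReal.ofReal (S17.qq L (m - L) * (1/2:ℝ)^L) := by
            apply Finset.sum_le_sum
            intro m hm
            simp only [Finset.mem_Icc] at hm
            apply ENNReal.ofReal_le_ofReal
            apply mul_le_mul_of_nonneg_right _ (by positivity)
            exact S17.qq_anti hL (by omega)
      _ ≤ ∑ m ∈ S17.Mset L β j, ENNReal.ofReal (S17.qq L (m - L) * (1/2:ℝ)^L) :=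
            Finset.sum_le_sum_of_subset hsub2
    have hcard : (Finset.Icc (j*β + L) T).card = β - L + 1 := by
      rw [Nat.card_Icc]; omega
    have hconst : ∑ m ∈ Finset.Icc (j*β + L) T,
          ENNReal.ofReal (S17.qq L (T - L) * (1/2:ℝ)^L)
        = ENNReal.ofReal (((β - L + 1 : ℕ):ℝ) * (S17.qq L (T - L) * (1/2:ℝ)^L)) := by
      rw [Finset.sum_const, hcard, nsmul_eq_mul, ← ENNReal.ofReal_natCast (β - L + 1),
        ← ENNReal.ofReal_mul (by positivity)]
    -- the real inequality
    have hq1 : (3/10:ℝ)^(j+1) ≤ S17.qq L (T - L) := by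
      have e1 : S17.lam L ^ T ≤ S17.lam L ^ (T - L) :=
        pow_le_pow_of_le_one (le_of_lt hlam0) (le_of_lt hlam1) (Nat.sub_le T L)
      have e2 : S17.lam L ^ T = (S17.lam L ^ β)^(j+1) := by
        rw [hT, mul_comm, pow_mul]
      have e3 : (3/10:ℝ)^(j+1) ≤ (S17.lam L ^ β)^(j+1) := by
        apply pow_le_pow_left₀ (by norm_num)
        rw [hβ]; exact S17.lam_pow_beta hL
      have e4 := S17.qq_ge hL (T - L)
      calc (3/10:ℝ)^(j+1) ≤ (S17.lam L ^ β)^(j+1) := e3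
      _ = S17.lam L ^ T := e2.symm
      _ ≤ S17.lam L ^ (T - L) := e1
      _ ≤ S17.qq L (T - L) := e4
    have hbp1 : (99/100:ℝ) ≤ ((β - L + 1 : ℕ):ℝ) * (1/2:ℝ)^L := by
      have hbpp : ((β:ℕ):ℝ) * S17.pp L = 1 := by
        rw [hβ]; exact S17.beta_mul_pp L
      have hc := S17.hL0 (L := L) hL
      have hp4 := S17.hp4 (L := L) hL
      have hcast : ((β - L + 1 : ℕ):ℝ) = ((β:ℕ):ℝ) - (L:ℝ) + 1 := by
        have hLβ' : L ≤ β := by omega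
        push_cast [Nat.cast_sub hLβ']; ring
      have e0 : (0:ℝ) ≤ (L:ℝ) - 100 := by linarith
      have e1 : (0:ℝ) ≤ (L:ℝ) := by linarith
      have key : (100:ℝ)*(L:ℝ) ≤ (L:ℝ)^4 := by
        nlinarith [mul_nonneg e0 e1, mul_nonneg (mul_nonneg e0 e1) e1,
          mul_nonneg (mul_nonneg (mul_nonneg e0 e1) e1) e1]
      have hLp : (100:ℝ) * ((L:ℝ) * S17.pp L) ≤ 1 := by
        nlinarith [mul_le_mul_of_nonneg_right key (le_of_lt hpp), hpp, hp4]
      rw [hcast, ← hppdef]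
      nlinarith [hbpp, hLp, hpp]
    have h65 : (6/5:ℝ) ≤ (6/5:ℝ)^(j+1) := le_self_pow₀ (by norm_num) (by omega)
    have hsplit : (3/10:ℝ)^(j+1) = (1/4:ℝ)^(j+1) * (6/5:ℝ)^(j+1) := by
      rw [← mul_pow]; norm_num
    have hp14 : (0:ℝ) < (1/4:ℝ)^(j+1) := by positivity
    have hqnn : 0 ≤ S17.qq L (T - L) := S17.qq_nonneg hL _
    have hmul : (99/100:ℝ) * ((3/10:ℝ)^(j+1)) ≤
        (((β - L + 1 : ℕ):ℝ) * (1/2:ℝ)^L) * S17.qq L (T - L) :=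
      mul_le_mul hbp1 hq1 (by positivity) (le_trans (by norm_num) hbp1)
    have h66 : (1/4:ℝ)^(j+1) * (6/5:ℝ) ≤ (1/4:ℝ)^(j+1) * (6/5:ℝ)^(j+1) :=
      mul_le_mul_of_nonneg_left h65 (le_of_lt hp14)
    have hreal : (2:ℝ) ^ (-(2 * (j:ℝ)) - 2) <
        ((β - L + 1 : ℕ):ℝ) * (S17.qq L (T - L) * (1/2:ℝ)^L) := by
      have hrw : (2:ℝ)^(-(2*(j:ℝ)) - 2) = (1/4:ℝ)^(j+1) := by
        have h1 : (-(2*(j:ℝ)) - 2) = -(((2*j+2 : ℕ)):ℝ) := by push_cast; ring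
        rw [h1, Real.rpow_neg (by norm_num : (0:ℝ) ≤ 2), Real.rpow_natCast,
          show (1/4:ℝ) = ((2:ℝ)^2)⁻¹ by norm_num, inv_pow, ← pow_mul,
          show 2*(j+1) = 2*j+2 from by ring]
      rw [hrw]
      nlinarith [hmul, hsplit, h66, hp14]
    have hqpos : (0:ℝ) < ((β - L + 1 : ℕ):ℝ) * (S17.qq L (T - L) * (1/2:ℝ)^L) := by
      have : (0:ℝ) < (2:ℝ) ^ (-(2*(j:ℝ)) - 2) := Real.rpow_pos_of_pos (by norm_num) _
      linarith
    calc ENNReal.ofReal ((2:ℝ) ^ (-(2 * (j:ℝ)) - 2))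
        < ENNReal.ofReal (((β - L + 1 : ℕ):ℝ) * (S17.qq L (T - L) * (1/2:ℝ)^L)) :=
          (ENNReal.ofReal_lt_ofReal_iff hqpos).mpr hreal
    _ = ∑ m ∈ Finset.Icc (j*β + L) T, ENNReal.ofReal (S17.qq L (T - L) * (1/2:ℝ)^L) :=
          hconst.symm
    _ ≤ ∑ m ∈ S17.Mset L β j, ENNReal.ofReal (S17.qq L (m - L) * (1/2:ℝ)^L) := hstep1
  · -- upper bound
    by_cases hj : j = 0
    · subst hj
      have hRHS : ENNReal.ofReal ((5/2:ℝ) ^ (-((0:ℕ):ℝ))) = 1 := by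
        norm_num
      rw [hRHS]
      have hsubc : (⋃ m ∈ S17.Mset L β 0, S17.FirstAt L m) ⊆ (S17.Ee L 0 β)ᶜ := by
        apply Set.iUnion₂_subset
        intro m hm y hy hyE
        simp only [S17.Mset, Finset.mem_filter, Finset.mem_Ioc] at hm
        exact hyE (m:ℤ) (by omega) (by omega) hy.2
      have h2 : μ (⋃ m ∈ S17.Mset L β 0, S17.FirstAt L m) ≤ μ ((S17.Ee L 0 β)ᶜ) :=
        measure_mono hsubc
      have h3 : μ ((S17.Ee L 0 β)ᶜ) = 1 - μ (S17.Ee L 0 β) :=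
        prob_compl_eq_one_sub (S17.Ee_measurable hL1 0 β)
      have h4 : μ (S17.Ee L 0 β) = ENNReal.ofReal (S17.qq L β) :=
        S17.meas_Ee hprob hcyl hL 0 (le_refl 0) β
      have h5 : 0 < S17.qq L β := lt_of_lt_of_le (pow_pos hlam0 β) (S17.qq_ge hL β)
      have h6 : (1:ℝ≥0∞) - μ (S17.Ee L 0 β) < 1 := by
        rw [h4]
        exact ENNReal.sub_lt_self ENNReal.one_ne_top one_ne_zero
          (ENNReal.ofReal_pos.mpr h5).ne'
      exact lt_of_le_of_lt (h2.trans (le_of_eq h3)) h6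
    · have hsubE : (⋃ m ∈ S17.Mset L β j, S17.FirstAt L m) ⊆ S17.Ee L 0 (j*β) := by
        apply Set.iUnion₂_subset
        intro m hm y hy
        simp only [S17.Mset, Finset.mem_filter, Finset.mem_Ioc] at hm
        exact S17.Ee_mono 0 (by omega) hy.1
      have h2 : μ (⋃ m ∈ S17.Mset L β j, S17.FirstAt L m)
          ≤ ENNReal.ofReal (S17.qq L (j*β)) :=
        (measure_mono hsubE).trans_eq (S17.meas_Ee hprob hcyl hL 0 (le_refl 0) (j*β))
      have hr1 : S17.qq L (j*β) ≤ S17.qq L (j*(β - L)) :=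
        S17.qq_anti hL (Nat.mul_le_mul_left j (Nat.sub_le β L))
      have hr2 : S17.qq L (j*(β-L)) ≤ S17.qq L (β-L)^j :=
        S17.qq_pow hprob hcyl hL (β-L) j
      have hr3 : S17.qq L (β-L)^j ≤ (39/100:ℝ)^j := by
        apply pow_le_pow_left₀ (S17.qq_nonneg hL _)
        rw [hβ]; exact S17.qq_upper hL
      have hr4 : (39/100:ℝ)^j < (2/5:ℝ)^j := by
        apply pow_lt_pow_left₀ (by norm_num) (by norm_num) hj
      have hRHS : ENNReal.ofReal ((5/2:ℝ)^(-(j:ℝ))) = ENNReal.ofReal ((2/5:ℝ)^j) := by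
        congr 1
        rw [Real.rpow_neg (by norm_num), Real.rpow_natCast, ← inv_pow]
        norm_num
      rw [hRHS]
      calc μ (⋃ m ∈ S17.Mset L β j, S17.FirstAt L m)
          ≤ ENNReal.ofReal (S17.qq L (j*β)) := h2
      _ < ENNReal.ofReal ((2/5:ℝ)^j) := by
          apply (ENNReal.ofReal_lt_ofReal_iff (by positivity)).mpr
          linarith
end
end
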